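/- arXiv:2211.09874 — 10 statements merged into one kernel-verified Lean document; each statement's English description precedes it below -/
import Mathlib

section
/- Let a, b, c be pairwise relatively prime positive integers and set 𝔠 := 2abc − ab − ac − bc + 1. Every element s of the numerical semigroup S = ⟨ab, ac, bc⟩ with s < 𝔠 that admits more than one factorization is of the form s = abc + x·ab + y·ac + z·bc for some natural numbers x, y, z with 0 ≤ x ≤ c−1, 0 ≤ y ≤ b−1, 0 ≤ z ≤ a−1; moreover, the set of all factorizations of such an s is exactly {(c+x, y, z), (x, b+y, z), (x, y, a+z)}, so s admits exactly three factorizations. -/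
/-- Cancellation lemma: in `p*g + t1*(r1*m) + t2*(r2*m) = q*g + s1*(r1*m) + s2*(r2*m)`
with `g` coprime to `m`, we get `p ≡ q [MOD m]`. -/
lemma resid_aux (g m r1 r2 p q t1 t2 s1 s2 : ℕ) (hg : Nat.Coprime g m)
    (h : p * g + t1 * (r1 * m) + t2 * (r2 * m) = q * g + s1 * (r1 * m) + s2 * (r2 * m)) :
    p % m = q % m := by
  have key : ∀ u1 u2 : ℕ, u1 * (r1 * m) + u2 * (r2 * m) ≡ 0 [MOD m] := fun u1 u2 =>
    (Nat.modEq_zero_iff_dvd).2 ⟨u1 * r1 + u2 * r2, by ring⟩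
  have h1 : p * g ≡ q * g [MOD m] := by
    calc p * g ≡ p * g + (t1 * (r1 * m) + t2 * (r2 * m)) [MOD m] := by
            simpa using (Nat.ModEq.refl (p * g)).add (key t1 t2).symm
      _ = q * g + (s1 * (r1 * m) + s2 * (r2 * m)) := by omega
      _ ≡ q * g [MOD m] := by
            simpa using (Nat.ModEq.refl (q * g)).add (key s1 s2)
  exact Nat.ModEq.cancel_right_of_coprime hg.symm h1

/-- For pairwise coprime positive `a, b, c`, every element `s` of
`S = ⟨ab, ac, bc⟩` below the conductor `𝔠 = 2abc − ab − ac − bc + 1` admitting more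
than one factorization is of the form `s = abc + x·ab + y·ac + z·bc` with
`x ≤ c−1`, `y ≤ b−1`, `z ≤ a−1`, and its set of factorizations is exactly
`{(c+x, y, z), (x, b+y, z), (x, y, a+z)}`. -/
theorem stmt_0 (a b c : ℕ) (ha : 0 < a) (hb : 0 < b) (hc : 0 < c)
    (hab : Nat.Coprime a b) (hac : Nat.Coprime a c) (hbc : Nat.Coprime b c)
    (s : ℕ) (hs : (s : ℤ) < 2 * (a : ℤ) * b * c - a * b - a * c - b * c + 1)
    (hmulti : ∃ v w : ℕ × ℕ × ℕ, v ≠ w ∧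
      v.1 * (a * b) + v.2.1 * (a * c) + v.2.2 * (b * c) = s ∧
      w.1 * (a * b) + w.2.1 * (a * c) + w.2.2 * (b * c) = s) :
    ∃ x y z : ℕ, x ≤ c - 1 ∧ y ≤ b - 1 ∧ z ≤ a - 1 ∧
      s = a * b * c + x * (a * b) + y * (a * c) + z * (b * c) ∧
      {v : ℕ × ℕ × ℕ | v.1 * (a * b) + v.2.1 * (a * c) + v.2.2 * (b * c) = s} =
        ({(c + x, y, z), (x, b + y, z), (x, y, a + z)} : Set (ℕ × ℕ × ℕ)) := by
  obtain ⟨v, w, hvw, hv, hw⟩ := hmulti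
  obtain ⟨x0, hx0⟩ : ∃ x0, x0 = v.1 % c := ⟨_, rfl⟩
  obtain ⟨y0, hy0⟩ : ∃ y0, y0 = v.2.1 % b := ⟨_, rfl⟩
  obtain ⟨z0, hz0⟩ : ∃ z0, z0 = v.2.2 % a := ⟨_, rfl⟩
  have habc : 0 < a * b * c := by positivity
  -- every factorization decomposes over the canonical residues
  have decomp : ∀ u : ℕ × ℕ × ℕ,
      u.1 * (a * b) + u.2.1 * (a * c) + u.2.2 * (b * c) = s →
      ∃ i j k : ℕ, u = (x0 + c * i, y0 + b * j, z0 + a * k) ∧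
        s = x0 * (a * b) + y0 * (a * c) + z0 * (b * c) + (i + j + k) * (a * b * c) := by
    intro u hu
    have huv : u.1 * (a * b) + u.2.1 * (a * c) + u.2.2 * (b * c)
        = v.1 * (a * b) + v.2.1 * (a * c) + v.2.2 * (b * c) := hu.trans hv.symm
    have hx : u.1 % c = x0 := by
      rw [hx0]
      exact resid_aux (a * b) c a b u.1 v.1 u.2.1 u.2.2 v.2.1 v.2.2 (hac.mul hbc) huv
    have hy : u.2.1 % b = y0 := by
      rw [hy0]
      refine resid_aux (a * c) b a c u.2.1 v.2.1 u.1 u.2.2 v.1 v.2.2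
        (hab.mul hbc.symm) ?_
      linarith [huv]
    have hz : u.2.2 % a = z0 := by
      rw [hz0]
      refine resid_aux (b * c) a b c u.2.2 v.2.2 u.1 u.2.1 v.1 v.2.1
        (hab.symm.mul hac.symm) ?_
      linarith [huv]
    obtain ⟨i, hi⟩ : ∃ i, u.1 = x0 + c * i :=
      ⟨u.1 / c, by conv_lhs => rw [← Nat.mod_add_div u.1 c, hx]⟩
    obtain ⟨j, hj⟩ : ∃ j, u.2.1 = y0 + b * j :=
      ⟨u.2.1 / b, by conv_lhs => rw [← Nat.mod_add_div u.2.1 b, hy]⟩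
    obtain ⟨k, hk⟩ : ∃ k, u.2.2 = z0 + a * k :=
      ⟨u.2.2 / a, by conv_lhs => rw [← Nat.mod_add_div u.2.2 a, hz]⟩
    refine ⟨i, j, k, Prod.ext hi (Prod.ext hj hk), ?_⟩
    rw [← hu, hi, hj, hk]; ring
  obtain ⟨i1, j1, k1, hv1, hsv⟩ := decomp v hv
  obtain ⟨i2, j2, k2, hw1, hsw⟩ := decomp w hw
  -- the "height" N is the same for all factorizations
  have hNeq : ∀ {n m : ℕ},
      s = x0 * (a * b) + y0 * (a * c) + z0 * (b * c) + n * (a * b * c) →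
      s = x0 * (a * b) + y0 * (a * c) + z0 * (b * c) + m * (a * b * c) → n = m := by
    intro n m h1 h2
    have h3 : n * (a * b * c) = m * (a * b * c) := by linarith
    exact Nat.eq_of_mul_eq_mul_right habc h3
  -- N ≤ 1 from the conductor bound
  have hsZ : (s : ℤ) = (x0 : ℤ) * (a * b) + y0 * (a * c) + z0 * (b * c)
      + ((i1 + j1 + k1 : ℕ) : ℤ) * (a * b * c) := by exact_mod_cast hsv
  have hab1 : (1 : ℤ) ≤ (a : ℤ) * b := by
    exact_mod_cast Nat.one_le_iff_ne_zero.2 (Nat.mul_pos ha hb).ne'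
  have hac1 : (1 : ℤ) ≤ (a : ℤ) * c := by
    exact_mod_cast Nat.one_le_iff_ne_zero.2 (Nat.mul_pos ha hc).ne'
  have hbc1 : (1 : ℤ) ≤ (b : ℤ) * c := by
    exact_mod_cast Nat.one_le_iff_ne_zero.2 (Nat.mul_pos hb hc).ne'
  have habcZ : (1 : ℤ) ≤ (a : ℤ) * b * c := by
    exact_mod_cast Nat.one_le_iff_ne_zero.2 habc.ne'
  have hb1 : (0 : ℤ) ≤ (x0 : ℤ) * (a * b) + y0 * (a * c) + z0 * (b * c) := by positivity
  have hNle : i1 + j1 + k1 ≤ 1 := by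
    by_contra hcon
    push_neg at hcon
    have h2 : (2 : ℤ) ≤ ((i1 + j1 + k1 : ℕ) : ℤ) := by exact_mod_cast hcon
    have h4 : (2 : ℤ) * ((a : ℤ) * b * c) ≤ ((i1 + j1 + k1 : ℕ) : ℤ) * ((a : ℤ) * b * c) :=
      mul_le_mul_of_nonneg_right h2 (le_trans zero_le_one habcZ)
    linarith
  -- N ≠ 0 since there are two distinct factorizations
  have hNne : i1 + j1 + k1 ≠ 0 := by
    intro h0
    apply hvw
    have h1 : i1 = 0 ∧ j1 = 0 ∧ k1 = 0 := by omega
    have h0' : i2 = 0 ∧ j2 = 0 ∧ k2 = 0 := by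
      have := hNeq hsv hsw; omega
    rw [hv1, hw1, h1.1, h1.2.1, h1.2.2, h0'.1, h0'.2.1, h0'.2.2]
  have hN1 : i1 + j1 + k1 = 1 := by omega
  have hS : s = a * b * c + x0 * (a * b) + y0 * (a * c) + z0 * (b * c) := by
    rw [hsv, hN1]; ring
  refine ⟨x0, y0, z0, ?_, ?_, ?_, hS, ?_⟩
  · have := Nat.mod_lt v.1 hc; omega
  · have := Nat.mod_lt v.2.1 hb; omega
  · have := Nat.mod_lt v.2.2 ha; omega
  · ext u
    simp only [Set.mem_setOf_eq, Set.mem_insert_iff, Set.mem_singleton_iff]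
    constructor
    · intro hu
      obtain ⟨i, j, k, hu1, hsu⟩ := decomp u hu
      have hN : i + j + k = 1 := (hNeq hsu hsv).trans hN1
      rcases (by omega : (i = 1 ∧ j = 0 ∧ k = 0) ∨ (i = 0 ∧ j = 1 ∧ k = 0) ∨
          (i = 0 ∧ j = 0 ∧ k = 1)) with ⟨h1, h2, h3⟩ | ⟨h1, h2, h3⟩ | ⟨h1, h2, h3⟩
      · left; rw [hu1, h1, h2, h3]; simp only [Prod.mk.injEq]; omega
      · right; left; rw [hu1, h1, h2, h3]; simp only [Prod.mk.injEq]; omega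
      · right; right; rw [hu1, h1, h2, h3]; simp only [Prod.mk.injEq]; omega
    · intro hu
      rcases hu with rfl | rfl | rfl
      · show (c + x0) * (a * b) + y0 * (a * c) + z0 * (b * c) = s
        rw [hS]; ring
      · show x0 * (a * b) + (b + y0) * (a * c) + z0 * (b * c) = s
        rw [hS]; ring
      · show x0 * (a * b) + y0 * (a * c) + (a + z0) * (b * c) = s
        rw [hS]; ring
end

section
/- Let a, b, c be pairwise relatively prime positive integers and set 𝔠 := 2abc − ab − ac − bc + 1. Every element s of the numerical semigroup S = ⟨ab, ac, bc⟩ with s < 𝔠 admits either exactly one or exactly three factorizations as a nonnegative integer combination of ab, ac, bc. -/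
private lemma decomp' (a b c x y z : ℕ) :
    x * (a * b) + y * (a * c) + z * (b * c) =
      x % c * (a * b) + y % b * (a * c) + z % a * (b * c) +
        (x / c + y / b + z / a) * (a * b * c) := by
  conv_lhs => rw [← Nat.mod_add_div x c, ← Nat.mod_add_div y b, ← Nat.mod_add_div z a]
  ring

private lemma cong_c' (a b c x₁ y₁ z₁ x₂ y₂ z₂ : ℕ)
    (hac : Nat.Coprime a c) (hbc : Nat.Coprime b c)
    (h : x₁ * (a * b) + y₁ * (a * c) + z₁ * (b * c)
       = x₂ * (a * b) + y₂ * (a * c) + z₂ * (b * c)) :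
    x₁ % c = x₂ % c := by
  have d1 : y₁ * (a * c) + z₁ * (b * c) ≡ 0 [MOD c] :=
    (Nat.modEq_zero_iff_dvd).mpr ⟨y₁ * a + z₁ * b, by ring⟩
  have d2 : y₂ * (a * c) + z₂ * (b * c) ≡ 0 [MOD c] :=
    (Nat.modEq_zero_iff_dvd).mpr ⟨y₂ * a + z₂ * b, by ring⟩
  have e : x₁ * (a * b) ≡ x₂ * (a * b) [MOD c] := by
    calc x₁ * (a * b) = x₁ * (a * b) + 0 := by ring
    _ ≡ x₁ * (a * b) + (y₁ * (a * c) + z₁ * (b * c)) [MOD c] := Nat.ModEq.add_left _ d1.symm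
    _ = x₂ * (a * b) + (y₂ * (a * c) + z₂ * (b * c)) := by omega
    _ ≡ x₂ * (a * b) + 0 [MOD c] := Nat.ModEq.add_left _ d2
    _ = x₂ * (a * b) := by ring
  exact Nat.ModEq.cancel_right_of_coprime (Nat.Coprime.symm (hac.mul hbc)) e

private lemma eq_rep' (p c m q : ℕ) (h1 : p % c = m) (h2 : p / c = q) : p = m + c * q := by
  calc p = p % c + c * (p / c) := (Nat.mod_add_div p c).symm
  _ = m + c * q := by rw [h1, h2]

private lemma sum_eq_zero' (u v w : ℕ) (h : u + v + w = 0) : u = 0 ∧ v = 0 ∧ w = 0 := by omega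

private lemma sum_eq_one' (u v w : ℕ) (h : u + v + w = 1) :
    (u = 1 ∧ v = 0 ∧ w = 0) ∨ (u = 0 ∧ v = 1 ∧ w = 0) ∨ (u = 0 ∧ v = 0 ∧ w = 1) := by omega

/-- For pairwise coprime positive `a, b, c`, every element of
`S = ⟨ab, ac, bc⟩` strictly below the conductor `𝔠 = 2abc − ab − ac − bc + 1`
admits either exactly one or exactly three factorizations over `{ab, ac, bc}`. -/
theorem stmt_1 (a b c : ℕ) (ha : 0 < a) (hb : 0 < b) (hc : 0 < c)
    (hab : Nat.Coprime a b) (hac : Nat.Coprime a c) (hbc : Nat.Coprime b c)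
    (s : ℕ)
    (hmem : ∃ x y z : ℕ, x * (a * b) + y * (a * c) + z * (b * c) = s)
    (hs : (s : ℤ) < 2 * (a : ℤ) * b * c - a * b - a * c - b * c + 1) :
    {v : ℕ × ℕ × ℕ | v.1 * (a * b) + v.2.1 * (a * c) + v.2.2 * (b * c) = s}.ncard = 1 ∨
    {v : ℕ × ℕ × ℕ | v.1 * (a * b) + v.2.1 * (a * c) + v.2.2 * (b * c) = s}.ncard = 3 := by
  obtain ⟨x, y, z, hxyz⟩ := hmem
  have habc : 0 < a * b * c := by positivity
  -- every factorization has the same residues and the same quotient-sum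
  have hkey : ∀ p q r : ℕ, p * (a * b) + q * (a * c) + r * (b * c) = s →
      p % c = x % c ∧ q % b = y % b ∧ r % a = z % a ∧
      p / c + q / b + r / a = x / c + y / b + z / a := by
    intro p q r h
    have h' : p * (a * b) + q * (a * c) + r * (b * c)
        = x * (a * b) + y * (a * c) + z * (b * c) := by rw [h, hxyz]
    have e1 : p % c = x % c := cong_c' a b c p q r x y z hac hbc h'
    have e2 : q % b = y % b := cong_c' a c b q p r y x z hab hbc.symm
      (by ring_nf; ring_nf at h'; linarith)
    have e3 : r % a = z % a := cong_c' b c a r p q z x y hab.symm hac.symm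
      (by ring_nf; ring_nf at h'; linarith)
    refine ⟨e1, e2, e3, ?_⟩
    have d1 := decomp' a b c p q r
    have d2 := decomp' a b c x y z
    rw [e1, e2, e3] at d1
    have hmul : (p / c + q / b + r / a) * (a * b * c)
        = (x / c + y / b + z / a) * (a * b * c) := by linarith
    exact Nat.eq_of_mul_eq_mul_right habc hmul
  -- s < 2abc
  have hs2 : s < 2 * (a * b * c) := by
    have h1 : (1 : ℤ) ≤ (a : ℤ) := by exact_mod_cast ha
    have h2 : (1 : ℤ) ≤ (b : ℤ) := by exact_mod_cast hb
    have h3 : (1 : ℤ) ≤ (c : ℤ) := by exact_mod_cast hc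
    have : (s : ℤ) < 2 * ((a * b * c : ℕ) : ℤ) := by push_cast; nlinarith
    exact_mod_cast this
  have hd := decomp' a b c x y z
  rw [hxyz] at hd
  -- quotient-sum is at most 1
  have hN : x / c + y / b + z / a ≤ 1 := by
    by_contra hcon
    push_neg at hcon
    have h2 : 2 * (a * b * c) ≤ (x / c + y / b + z / a) * (a * b * c) :=
      Nat.mul_le_mul_right _ hcon
    linarith [Nat.zero_le (x % c * (a * b) + y % b * (a * c) + z % a * (b * c))]
  obtain ⟨x0, hx0⟩ : ∃ t, x % c = t := ⟨_, rfl⟩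
  obtain ⟨y0, hy0⟩ : ∃ t, y % b = t := ⟨_, rfl⟩
  obtain ⟨z0, hz0⟩ : ∃ t, z % a = t := ⟨_, rfl⟩
  rw [hx0, hy0, hz0] at hd
  interval_cases hN1 : x / c + y / b + z / a
  · -- N = 0 : unique factorization
    left
    rw [Set.ncard_eq_one]
    refine ⟨(x0, y0, z0), ?_⟩
    ext ⟨p, q, r⟩
    simp only [Set.mem_setOf_eq, Set.mem_singleton_iff, Prod.mk.injEq]
    constructor
    · intro h
      obtain ⟨e1, e2, e3, e4⟩ := hkey p q r h
      obtain ⟨u1, u2, u3⟩ := sum_eq_zero' _ _ _ e4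
      rw [hx0] at e1; rw [hy0] at e2; rw [hz0] at e3
      have := eq_rep' p c x0 0 e1 u1
      have := eq_rep' q b y0 0 e2 u2
      have := eq_rep' r a z0 0 e3 u3
      omega
    · rintro ⟨rfl, rfl, rfl⟩
      rw [hd]; ring
  · -- N = 1 : exactly three factorizations
    right
    rw [Set.ncard_eq_three]
    refine ⟨(x0 + c, y0, z0), (x0, y0 + b, z0), (x0, y0, z0 + a), ?_, ?_, ?_, ?_⟩
    · simp only [ne_eq, Prod.mk.injEq]; omega
    · simp only [ne_eq, Prod.mk.injEq]; omega
    · simp only [ne_eq, Prod.mk.injEq]; omega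
    ext ⟨p, q, r⟩
    simp only [Set.mem_setOf_eq, Set.mem_insert_iff, Set.mem_singleton_iff, Prod.mk.injEq]
    constructor
    · intro h
      obtain ⟨e1, e2, e3, e4⟩ := hkey p q r h
      rw [hx0] at e1; rw [hy0] at e2; rw [hz0] at e3
      rcases sum_eq_one' _ _ _ e4 with ⟨u1, u2, u3⟩ | ⟨u1, u2, u3⟩ | ⟨u1, u2, u3⟩
      · have := eq_rep' p c x0 1 e1 u1
        have := eq_rep' q b y0 0 e2 u2
        have := eq_rep' r a z0 0 e3 u3
        left; omega
      · have := eq_rep' p c x0 0 e1 u1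
        have := eq_rep' q b y0 1 e2 u2
        have := eq_rep' r a z0 0 e3 u3
        right; left; omega
      · have := eq_rep' p c x0 0 e1 u1
        have := eq_rep' q b y0 0 e2 u2
        have := eq_rep' r a z0 1 e3 u3
        right; right; omega
    · rintro (⟨rfl, rfl, rfl⟩ | ⟨rfl, rfl, rfl⟩ | ⟨rfl, rfl, rfl⟩) <;>
        (rw [hd]; ring)
end

section
/- Let a, b, c be pairwise relatively prime positive integers. If (x, y, z) and (x', y', z') are triples of natural numbers with x, x' ≤ c−1, y, y' ≤ b−1, z, z' ≤ a−1 and x·ab + y·ac + z·bc = x'·ab + y'·ac + z'·bc, then (x, y, z) = (x', y', z'). In other words, every natural number admits at most one factorization over {ab, ac, bc} whose three entries are bounded by c−1, b−1, a−1 respectively. -/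
/-- For pairwise coprime positive `a, b, c`, any natural number admits
at most one factorization `x·ab + y·ac + z·bc` with `x ≤ c−1`, `y ≤ b−1`, `z ≤ a−1`. -/
theorem stmt_2 (a b c : ℕ) (ha : 0 < a) (hb : 0 < b) (hc : 0 < c)
    (hab : Nat.Coprime a b) (hac : Nat.Coprime a c) (hbc : Nat.Coprime b c)
    (x y z x' y' z' : ℕ)
    (hx : x ≤ c - 1) (hy : y ≤ b - 1) (hz : z ≤ a - 1)
    (hx' : x' ≤ c - 1) (hy' : y' ≤ b - 1) (hz' : z' ≤ a - 1)
    (h : x * (a * b) + y * (a * c) + z * (b * c)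
        = x' * (a * b) + y' * (a * c) + z' * (b * c)) :
    x = x' ∧ y = y' ∧ z = z' := by
  have hza : z < a := lt_of_le_of_lt hz (Nat.sub_lt ha one_pos)
  have hza' : z' < a := lt_of_le_of_lt hz' (Nat.sub_lt ha one_pos)
  have hyb : y < b := lt_of_le_of_lt hy (Nat.sub_lt hb one_pos)
  have hyb' : y' < b := lt_of_le_of_lt hy' (Nat.sub_lt hb one_pos)
  -- z = z' mod a
  have hmodz : z * (b * c) ≡ z' * (b * c) [MOD a] := by
    have h1 : x * (a * b) + y * (a * c) + z * (b * c)
        ≡ x' * (a * b) + y' * (a * c) + z' * (b * c) [MOD a] := h ▸ Nat.ModEq.refl _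
    have e1 : ∀ u v w : ℕ, u * (a * b) + v * (a * c) + w * (b * c)
        = a * (u * b + v * c) + w * (b * c) := by intro u v w; ring
    rw [e1, e1] at h1
    exact (Nat.ModEq.add_left_cancel (Nat.modEq_zero_iff_dvd.mpr ⟨x * b + y * c, rfl⟩
      |>.trans (Nat.modEq_zero_iff_dvd.mpr ⟨x' * b + y' * c, rfl⟩).symm) h1)
  have hcop : Nat.Coprime (b * c) a := (hab.symm.mul hac.symm)
  have hz_eq : z = z' := by
    have := (Nat.ModEq.cancel_right_of_coprime hcop.symm hmodz)
    calc z = z % a := (Nat.mod_eq_of_lt hza).symm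
      _ = z' % a := this
      _ = z' := Nat.mod_eq_of_lt hza'
  subst hz_eq
  have h2 : x * (a * b) + y * (a * c) = x' * (a * b) + y' * (a * c) := by omega
  have hmody : y * (a * c) ≡ y' * (a * c) [MOD b] := by
    have h1 : x * (a * b) + y * (a * c) ≡ x' * (a * b) + y' * (a * c) [MOD b] :=
      h2 ▸ Nat.ModEq.refl _
    have e1 : ∀ u v : ℕ, u * (a * b) + v * (a * c) = b * (u * a) + v * (a * c) := by
      intro u v; ring
    rw [e1, e1] at h1
    exact (Nat.ModEq.add_left_cancel (Nat.modEq_zero_iff_dvd.mpr ⟨x * a, rfl⟩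
      |>.trans (Nat.modEq_zero_iff_dvd.mpr ⟨x' * a, rfl⟩).symm) h1)
  have hcop2 : Nat.Coprime (a * c) b := hab.mul hbc.symm
  have hy_eq : y = y' := by
    have := (Nat.ModEq.cancel_right_of_coprime hcop2.symm hmody)
    calc y = y % b := (Nat.mod_eq_of_lt hyb).symm
      _ = y' % b := this
      _ = y' := Nat.mod_eq_of_lt hyb'
  subst hy_eq
  have hx_eq : x = x' := by
    have hab0 : 0 < a * b := Nat.mul_pos ha hb
    have := Nat.eq_of_mul_eq_mul_right hab0 (by omega : x * (a * b) = x' * (a * b))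
    exact this
  exact ⟨hx_eq, rfl, rfl⟩
end

section
/- Let a, b, c be pairwise relatively prime positive integers and set 𝔠 := 2abc − ab − ac − bc + 1. If s is an element of the numerical semigroup S = ⟨ab, ac, bc⟩ with s < 𝔠, then every factorization (x, y, z) of s satisfies the strict inequality (x+1)/c + (y+1)/b + (z+1)/a < 2 in the rational numbers. -/
theorem stmt_3_key (a b c : ℕ) (ha : 0 < a) (hb : 0 < b) (hc : 0 < c)
    (hab : Nat.Coprime a b) (hac : Nat.Coprime a c) (hbc : Nat.Coprime b c)
    (x y z : ℕ)
    (hle : (x+1) * (a * b) + (y+1) * (a * c) + (z+1) * (b * c) ≤ 2 * (a*b*c)) :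
    (x+1) * (a * b) + (y+1) * (a * c) + (z+1) * (b * c) < 2 * (a*b*c) := by
  rcases lt_or_eq_of_le hle with h | h
  · exact h
  exfalso
  have htota : a ∣ (x+1) * (a * b) + (y+1) * (a * c) + (z+1) * (b * c) := by
    rw [h]; exact ⟨2*(b*c), by ring⟩
  have haz : a ∣ (z+1) * (b*c) :=
    (Nat.dvd_add_right (dvd_add ⟨(x+1)*b, by ring⟩ ⟨(y+1)*c, by ring⟩)).mp htota
  have ha' : a ∣ z + 1 := (Nat.Coprime.mul_right hab hac).dvd_of_dvd_mul_right haz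
  have htotb : b ∣ (x+1) * (a * b) + (z+1) * (b * c) + (y+1) * (a * c) := by
    have : (x+1) * (a * b) + (z+1) * (b * c) + (y+1) * (a * c) = 2*(a*b*c) := by omega
    rw [this]; exact ⟨2*(a*c), by ring⟩
  have hby : b ∣ (y+1) * (a*c) :=
    (Nat.dvd_add_right (dvd_add ⟨(x+1)*a, by ring⟩ ⟨(z+1)*c, by ring⟩)).mp htotb
  have hb' : b ∣ y + 1 := (Nat.Coprime.mul_right hab.symm hbc).dvd_of_dvd_mul_right hby
  have htotc : c ∣ (y+1) * (a * c) + (z+1) * (b * c) + (x+1) * (a * b) := by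
    have : (y+1) * (a * c) + (z+1) * (b * c) + (x+1) * (a * b) = 2*(a*b*c) := by omega
    rw [this]; exact ⟨2*(a*b), by ring⟩
  have hcx : c ∣ (x+1) * (a*b) :=
    (Nat.dvd_add_right (dvd_add ⟨(y+1)*a, by ring⟩ ⟨(z+1)*b, by ring⟩)).mp htotc
  have hc' : c ∣ x + 1 := (Nat.Coprime.mul_right hac.symm hbc.symm).dvd_of_dvd_mul_right hcx
  have h1 : c ≤ x + 1 := Nat.le_of_dvd (by omega) hc'
  have h2 : b ≤ y + 1 := Nat.le_of_dvd (by omega) hb'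
  have h3 : a ≤ z + 1 := Nat.le_of_dvd (by omega) ha'
  have e1 : c * (a*b) ≤ (x+1) * (a*b) := Nat.mul_le_mul_right _ h1
  have e2 : b * (a*c) ≤ (y+1) * (a*c) := Nat.mul_le_mul_right _ h2
  have e3 : a * (b*c) ≤ (z+1) * (b*c) := Nat.mul_le_mul_right _ h3
  have : 3 * (a*b*c) ≤ 2 * (a*b*c) := by nlinarith
  have : 0 < a*b*c := by positivity
  omega

/-- For pairwise coprime positive `a, b, c`, if `s ∈ S = ⟨ab, ac, bc⟩`
is strictly below the conductor `𝔠 = 2abc − ab − ac − bc + 1`, then every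
factorization `(x, y, z)` of `s` satisfies `(x+1)/c + (y+1)/b + (z+1)/a < 2` in `ℚ`. -/
theorem stmt_3 (a b c : ℕ) (ha : 0 < a) (hb : 0 < b) (hc : 0 < c)
    (hab : Nat.Coprime a b) (hac : Nat.Coprime a c) (hbc : Nat.Coprime b c)
    (s : ℕ) (hs : (s : ℤ) < 2 * (a : ℤ) * b * c - a * b - a * c - b * c + 1)
    (x y z : ℕ) (hfac : x * (a * b) + y * (a * c) + z * (b * c) = s) :
    ((x : ℚ) + 1) / c + ((y : ℚ) + 1) / b + ((z : ℚ) + 1) / a < 2 := by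
  have hle : (x+1) * (a * b) + (y+1) * (a * c) + (z+1) * (b * c) ≤ 2 * (a*b*c) := by
    have : ((x+1) * (a * b) + (y+1) * (a * c) + (z+1) * (b * c) : ℤ) ≤ 2 * (a*b*c) := by
      push_cast
      have : ((x : ℤ) * (a * b) + y * (a * c) + z * (b * c)) = s := by exact_mod_cast hfac
      nlinarith [this, hs]
    exact_mod_cast this
  have hlt := stmt_3_key a b c ha hb hc hab hac hbc x y z hle
  have hltQ : ((x : ℚ)+1) * (a * b) + ((y : ℚ)+1) * (a * c) + ((z : ℚ)+1) * (b * c)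
      < 2 * ((a : ℚ)*b*c) := by exact_mod_cast hlt
  have ha0 : (a : ℚ) ≠ 0 := Nat.cast_ne_zero.mpr ha.ne'
  have hb0 : (b : ℚ) ≠ 0 := Nat.cast_ne_zero.mpr hb.ne'
  have hc0 : (c : ℚ) ≠ 0 := Nat.cast_ne_zero.mpr hc.ne'
  rw [div_add_div _ _ hc0 hb0, div_add_div _ _ (mul_ne_zero hc0 hb0) ha0,
    div_lt_iff₀ (by positivity)]
  nlinarith [hltQ]
end

section
/- Let a, b, c be pairwise relatively prime positive integers and set F := 2abc − ab − ac − bc (as an integer). Then there is no triple (x, y, z) of natural numbers with x·ab + y·ac + z·bc = F, while every integer n > F belongs to the numerical semigroup S = ⟨ab, ac, bc⟩. Consequently F is the Frobenius number of S and 𝔠 = F + 1 is its conductor. -/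
lemma two_gen_aux (b c : ℕ) (hb : 0 < b) (hc : 0 < c) (hbc : Nat.Coprime b c)
    (m : ℤ) (hm : (b : ℤ) * c - b - c < m) :
    ∃ x y : ℕ, (x : ℤ) * b + (y : ℤ) * c = m := by
  haveI : NeZero b := ⟨hb.ne'⟩
  have hu : IsUnit ((c : ZMod b)) := (ZMod.isUnit_iff_coprime c b).mpr hbc.symm
  set y0 : ℕ := (((m : ZMod b)) * (c : ZMod b)⁻¹).val with hy0
  have hylt : y0 < b := ZMod.val_lt _
  have hdvd : (b : ℤ) ∣ m - (y0 : ℤ) * c := by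
    have h0 : ((m - (y0 : ℤ) * c : ℤ) : ZMod b) = 0 := by
      push_cast
      rw [hy0, ZMod.natCast_val, ZMod.cast_id, mul_assoc,
        ZMod.inv_mul_of_unit _ hu, mul_one, sub_self]
    exact_mod_cast (ZMod.intCast_zmod_eq_zero_iff_dvd _ _).mp h0
  obtain ⟨x', hx'⟩ := hdvd
  have hy0le : (y0 : ℤ) ≤ (b : ℤ) - 1 := by
    have := hylt; omega
  have hc' : (0 : ℤ) < c := by exact_mod_cast hc
  have hb' : (0 : ℤ) < b := by exact_mod_cast hb
  have hbnd : (b : ℤ) * (-1) < (b : ℤ) * x' := by nlinarith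
  have hx'nonneg : 0 ≤ x' := by
    have := lt_of_mul_lt_mul_left hbnd (le_of_lt hb'); omega
  refine ⟨x'.toNat, y0, ?_⟩
  rw [Int.toNat_of_nonneg hx'nonneg]
  linarith [hx']

/-- For pairwise coprime positive `a, b, c` and
`F := 2abc − ab − ac − bc` (as an integer), no triple of naturals `(x, y, z)`
satisfies `x·ab + y·ac + z·bc = F`, while every integer `n > F` lies in
`S = ⟨ab, ac, bc⟩`; hence `F` is the Frobenius number of `S` and `F + 1` its conductor. -/
theorem stmt_4 (a b c : ℕ) (ha : 0 < a) (hb : 0 < b) (hc : 0 < c)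
    (hab : Nat.Coprime a b) (hac : Nat.Coprime a c) (hbc : Nat.Coprime b c) :
    (¬ ∃ x y z : ℕ, (x : ℤ) * (a * b) + (y : ℤ) * (a * c) + (z : ℤ) * (b * c)
        = 2 * (a : ℤ) * b * c - a * b - a * c - b * c) ∧
    (∀ n : ℤ, 2 * (a : ℤ) * b * c - a * b - a * c - b * c < n →
      ∃ x y z : ℕ, (x : ℤ) * (a * b) + (y : ℤ) * (a * c) + (z : ℤ) * (b * c) = n) := by
  have ha' : (0 : ℤ) < a := by exact_mod_cast ha
  have hb' : (0 : ℤ) < b := by exact_mod_cast hb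
  have hc' : (0 : ℤ) < c := by exact_mod_cast hc
  constructor
  · rintro ⟨x, y, z, hxyz⟩
    -- coprimality as IsCoprime in ℤ
    have habc : IsCoprime (a : ℤ) ((b : ℤ) * c) := by
      have h : Nat.Coprime a (b * c) := Nat.Coprime.mul_right hab hac
      exact_mod_cast Nat.isCoprime_iff_coprime.mpr h
    have hbac : IsCoprime (b : ℤ) ((a : ℤ) * c) := by
      have h : Nat.Coprime b (a * c) := Nat.Coprime.mul_right hab.symm hbc
      exact_mod_cast Nat.isCoprime_iff_coprime.mpr h
    have hcab : IsCoprime (c : ℤ) ((a : ℤ) * b) := by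
      have h : Nat.Coprime c (a * b) := Nat.Coprime.mul_right hac.symm hbc.symm
      exact_mod_cast Nat.isCoprime_iff_coprime.mpr h
    have hza : (a : ℤ) ∣ ((z : ℤ) + 1) := by
      apply habc.dvd_of_dvd_mul_right
      exact ⟨2 * b * c - (x + 1) * b - (y + 1) * c, by linear_combination hxyz⟩
    have hyb : (b : ℤ) ∣ ((y : ℤ) + 1) := by
      apply hbac.dvd_of_dvd_mul_right
      exact ⟨2 * a * c - (x + 1) * a - (z + 1) * c, by linear_combination hxyz⟩
    have hxc : (c : ℤ) ∣ ((x : ℤ) + 1) := by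
      apply hcab.dvd_of_dvd_mul_right
      exact ⟨2 * a * b - (y + 1) * a - (z + 1) * b, by linear_combination hxyz⟩
    have h1 : (a : ℤ) ≤ (z : ℤ) + 1 := Int.le_of_dvd (by positivity) hza
    have h2 : (b : ℤ) ≤ (y : ℤ) + 1 := Int.le_of_dvd (by positivity) hyb
    have h3 : (c : ℤ) ≤ (x : ℤ) + 1 := Int.le_of_dvd (by positivity) hxc
    have e1 : (a : ℤ) * ((b : ℤ) * c) ≤ ((z : ℤ) + 1) * ((b : ℤ) * c) :=
      mul_le_mul_of_nonneg_right h1 (by positivity)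
    have e2 : (b : ℤ) * ((a : ℤ) * c) ≤ ((y : ℤ) + 1) * ((a : ℤ) * c) :=
      mul_le_mul_of_nonneg_right h2 (by positivity)
    have e3 : (c : ℤ) * ((a : ℤ) * b) ≤ ((x : ℤ) + 1) * ((a : ℤ) * b) :=
      mul_le_mul_of_nonneg_right h3 (by positivity)
    nlinarith [e1, e2, e3, hxyz, mul_pos (mul_pos ha' hb') hc']
  · intro n hn
    haveI : NeZero a := ⟨ha.ne'⟩
    have hu : IsUnit (((b * c : ℕ) : ZMod a)) :=
      (ZMod.isUnit_iff_coprime (b * c) a).mpr (Nat.Coprime.mul_right hab hac).symm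
    set z0 : ℕ := (((n : ZMod a)) * ((b * c : ℕ) : ZMod a)⁻¹).val with hz0
    have hzlt : z0 < a := ZMod.val_lt _
    have hdvd : (a : ℤ) ∣ n - (z0 : ℤ) * ((b : ℤ) * c) := by
      have h0 : ((n - (z0 : ℤ) * ((b : ℤ) * c) : ℤ) : ZMod a) = 0 := by
        push_cast
        rw [hz0, ZMod.natCast_val, ZMod.cast_id, mul_assoc]
        rw [show ((b : ZMod a) * c) = ((b * c : ℕ) : ZMod a) by push_cast; ring]
        rw [ZMod.inv_mul_of_unit _ hu, mul_one, sub_self]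
      exact_mod_cast (ZMod.intCast_zmod_eq_zero_iff_dvd _ _).mp h0
    obtain ⟨m', hm'⟩ := hdvd
    have hz0le : (z0 : ℤ) ≤ (a : ℤ) - 1 := by have := hzlt; omega
    have hmgt : (b : ℤ) * c - b - c < m' := by
      have h1 : (a : ℤ) * ((b : ℤ) * c - b - c) < (a : ℤ) * m' := by
        nlinarith [mul_le_mul_of_nonneg_right hz0le (mul_nonneg hb'.le hc'.le), hm', hn]
      exact lt_of_mul_lt_mul_left h1 (le_of_lt ha')
    obtain ⟨x, y, hxy⟩ := two_gen_aux b c hb hc hbc m' hmgt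
    refine ⟨x, y, z0, ?_⟩
    linear_combination (a : ℤ) * hxy - hm'
end

section
/- Let a, b, c be pairwise relatively prime positive integers. The element abc of the numerical semigroup S = ⟨ab, ac, bc⟩ admits exactly three factorizations, namely (c, 0, 0), (0, b, 0) and (0, 0, a), and these three vectors in ℕ³ are pairwise orthogonal with respect to the standard inner product. In particular, abc is a Betti element of {ab, ac, bc}: its set of factorizations splits into three distinct equivalence classes under the transitive closure of the relation identifying factorizations with nonzero inner product. -/
/-- The standard inner product on `ℕ³` (written as `ℕ × ℕ × ℕ`). -/
def dot3 (v w : ℕ × ℕ × ℕ) : ℕ := v.1 * w.1 + v.2.1 * w.2.1 + v.2.2 * w.2.2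

/-- `v` is a factorization of `s` over `{ab, ac, bc}`. -/
def IsFactorization (a b c s : ℕ) (v : ℕ × ℕ × ℕ) : Prop :=
  v.1 * (a * b) + v.2.1 * (a * c) + v.2.2 * (b * c) = s

/-- Two factorizations of `s` are related when both factor `s` and their
inner product is nonzero. -/
def FacRel (a b c s : ℕ) (v w : ℕ × ℕ × ℕ) : Prop :=
  IsFactorization a b c s v ∧ IsFactorization a b c s w ∧ dot3 v w ≠ 0

lemma fac_eq (a b c : ℕ) (ha : 0 < a) (hb : 0 < b) (hc : 0 < c)
    (hab : Nat.Coprime a b) (hac : Nat.Coprime a c) (hbc : Nat.Coprime b c) :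
    {v : ℕ × ℕ × ℕ | IsFactorization a b c (a * b * c) v} =
      ({(c, 0, 0), (0, b, 0), (0, 0, a)} : Set (ℕ × ℕ × ℕ)) := by
  ext ⟨x, y, z⟩
  simp only [Set.mem_setOf_eq, Set.mem_insert_iff, Set.mem_singleton_iff,
    IsFactorization, Prod.mk.injEq]
  constructor
  · intro h
    have htot : c ∣ x * (a * b) + (y * (a * c) + z * (b * c)) := by
      rw [← add_assoc, h]; exact ⟨a * b, by ring⟩
    have hcx : c ∣ x := by
      have h1 : c ∣ x * (a * b) :=
        (Nat.dvd_add_right (show c ∣ y * (a * c) + z * (b * c) from ⟨y * a + z * b, by ring⟩)).mp (by rwa [add_comm] at htot)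
      exact (Nat.Coprime.dvd_of_dvd_mul_right (hac.symm.mul_right hbc.symm)) h1
    have htot2 : b ∣ y * (a * c) + (x * (a * b) + z * (b * c)) := by
      have : y * (a * c) + (x * (a * b) + z * (b * c)) = a * b * c := by omega
      rw [this]; exact ⟨a * c, by ring⟩
    have hby : b ∣ y := by
      have h1 : b ∣ y * (a * c) :=
        (Nat.dvd_add_right (show b ∣ x * (a * b) + z * (b * c) from ⟨x * a + z * c, by ring⟩)).mp (by rwa [add_comm] at htot2)
      exact (Nat.Coprime.dvd_of_dvd_mul_right (hab.symm.mul_right hbc)) h1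
    have htot3 : a ∣ z * (b * c) + (x * (a * b) + y * (a * c)) := by
      have : z * (b * c) + (x * (a * b) + y * (a * c)) = a * b * c := by omega
      rw [this]; exact ⟨b * c, by ring⟩
    have haz : a ∣ z := by
      have h1 : a ∣ z * (b * c) :=
        (Nat.dvd_add_right (show a ∣ x * (a * b) + y * (a * c) from ⟨x * b + y * c, by ring⟩)).mp (by rwa [add_comm] at htot3)
      exact (Nat.Coprime.dvd_of_dvd_mul_right (hab.mul_right hac)) h1
    obtain ⟨x', rfl⟩ := hcx
    obtain ⟨y', rfl⟩ := hby
    obtain ⟨z', rfl⟩ := haz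
    have hsum : x' + y' + z' = 1 := by
      have h2 : a * b * c * (x' + y' + z') = a * b * c * 1 := by
        rw [mul_one]
        calc a * b * c * (x' + y' + z')
            = c * x' * (a * b) + b * y' * (a * c) + a * z' * (b * c) := by ring
          _ = a * b * c := h
      have hpos : 0 < a * b * c := by positivity
      exact Nat.eq_of_mul_eq_mul_left hpos h2
    have : (x' = 1 ∧ y' = 0 ∧ z' = 0) ∨ (x' = 0 ∧ y' = 1 ∧ z' = 0) ∨
        (x' = 0 ∧ y' = 0 ∧ z' = 1) := by omega
    rcases this with ⟨h1, h2, h3⟩ | ⟨h1, h2, h3⟩ | ⟨h1, h2, h3⟩ <;>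
      subst h1 <;> subst h2 <;> subst h3 <;> simp
  · rintro (⟨rfl, rfl, rfl⟩ | ⟨rfl, rfl, rfl⟩ | ⟨rfl, rfl, rfl⟩) <;> ring

lemma facrel_eq (a b c : ℕ) (ha : 0 < a) (hb : 0 < b) (hc : 0 < c)
    (hab : Nat.Coprime a b) (hac : Nat.Coprime a c) (hbc : Nat.Coprime b c)
    {v w : ℕ × ℕ × ℕ} (h : FacRel a b c (a * b * c) v w) : v = w := by
  obtain ⟨hv, hw, hd⟩ := h
  have hset := fac_eq a b c ha hb hc hab hac hbc
  have hv' : v ∈ ({(c, 0, 0), (0, b, 0), (0, 0, a)} : Set (ℕ × ℕ × ℕ)) := by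
    rw [← hset]; exact hv
  have hw' : w ∈ ({(c, 0, 0), (0, b, 0), (0, 0, a)} : Set (ℕ × ℕ × ℕ)) := by
    rw [← hset]; exact hw
  simp only [Set.mem_insert_iff, Set.mem_singleton_iff] at hv' hw'
  rcases hv' with rfl | rfl | rfl <;> rcases hw' with rfl | rfl | rfl <;>
    first
      | rfl
      | (exfalso; apply hd; simp [dot3])

/-- For pairwise coprime positive `a, b, c`, the element `abc` of
`S = ⟨ab, ac, bc⟩` has exactly the three factorizations `(c,0,0)`, `(0,b,0)`,
`(0,0,a)`, which are pairwise orthogonal; in particular `abc` is a Betti element: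
the three factorizations lie in three distinct equivalence classes under the
transitive (equivalence) closure of the relation identifying factorizations with
nonzero inner product. -/
theorem stmt_5 (a b c : ℕ) (ha : 0 < a) (hb : 0 < b) (hc : 0 < c)
    (hab : Nat.Coprime a b) (hac : Nat.Coprime a c) (hbc : Nat.Coprime b c) :
    {v : ℕ × ℕ × ℕ | IsFactorization a b c (a * b * c) v} =
      ({(c, 0, 0), (0, b, 0), (0, 0, a)} : Set (ℕ × ℕ × ℕ)) ∧
    dot3 (c, 0, 0) (0, b, 0) = 0 ∧
    dot3 (c, 0, 0) (0, 0, a) = 0 ∧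
    dot3 (0, b, 0) (0, 0, a) = 0 ∧
    ¬ Relation.EqvGen (FacRel a b c (a * b * c)) (c, 0, 0) (0, b, 0) ∧
    ¬ Relation.EqvGen (FacRel a b c (a * b * c)) (c, 0, 0) (0, 0, a) ∧
    ¬ Relation.EqvGen (FacRel a b c (a * b * c)) (0, b, 0) (0, 0, a) := by
  have key : ∀ v w, Relation.EqvGen (FacRel a b c (a * b * c)) v w → v = w := by
    intro v w h
    induction h with
    | rel _ _ h => exact facrel_eq a b c ha hb hc hab hac hbc h
    | refl _ => rfl
    | symm _ _ _ ih => exact ih.symm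
    | trans _ _ _ _ _ ih1 ih2 => exact ih1.trans ih2
  refine ⟨fac_eq a b c ha hb hc hab hac hbc, by simp [dot3], by simp [dot3],
    by simp [dot3], ?_, ?_, ?_⟩ <;>
    intro h <;> have := key _ _ h <;> simp [Prod.ext_iff] at this <;> omega
end

section
/- Let a, b, c be pairwise relatively prime positive integers. Every element s of the numerical semigroup S = ⟨ab, ac, bc⟩ with s < abc admits exactly one factorization as a nonnegative integer combination of ab, ac, bc. -/
lemma stmt6_cancel (n K : ℕ) (hK : Nat.gcd n K = 1) (u u' m m' : ℕ)
    (h : u * K + m * n = u' * K + m' * n) (hu : u < n) (hu' : u' < n) : u = u' := by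
  have e1 : u * K + m * n ≡ u * K [MOD n] :=
    ((Nat.modEq_iff_dvd' (Nat.le_add_right _ _)).2 ⟨m, by rw [Nat.add_sub_cancel_left, Nat.mul_comm]⟩).symm
  have e2 : u' * K + m' * n ≡ u' * K [MOD n] :=
    ((Nat.modEq_iff_dvd' (Nat.le_add_right _ _)).2 ⟨m', by rw [Nat.add_sub_cancel_left, Nat.mul_comm]⟩).symm
  have hmod : u * K ≡ u' * K [MOD n] := e1.symm.trans (h ▸ e2)
  exact (Nat.ModEq.cancel_right_of_coprime hK hmod).eq_of_lt_of_lt hu hu'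

/-- For pairwise coprime positive `a, b, c`, every element `s` of
`S = ⟨ab, ac, bc⟩` with `s < abc` admits exactly one factorization over `{ab, ac, bc}`. -/
theorem stmt_6 (a b c : ℕ) (ha : 0 < a) (hb : 0 < b) (hc : 0 < c)
    (hab : Nat.Coprime a b) (hac : Nat.Coprime a c) (hbc : Nat.Coprime b c)
    (s : ℕ) (hs : s < a * b * c)
    (hmem : ∃ v : ℕ × ℕ × ℕ, v.1 * (a * b) + v.2.1 * (a * c) + v.2.2 * (b * c) = s) :
    ∃! v : ℕ × ℕ × ℕ, v.1 * (a * b) + v.2.1 * (a * c) + v.2.2 * (b * c) = s := by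
  obtain ⟨v, hv⟩ := hmem
  refine ⟨v, hv, ?_⟩
  rintro ⟨x, y, z⟩ hw
  obtain ⟨x', y', z'⟩ := v
  simp only at hv hw ⊢
  have hlt : ∀ u K n : ℕ, 0 < K → u * K ≤ s → K * n = a * b * c → u < n := by
    intro u K n hKpos hle hKn
    by_contra h
    push_neg at h
    have h2 : K * n ≤ K * u := Nat.mul_le_mul_left _ h
    nlinarith
  -- x = x'
  have hx : x = x' := by
    refine stmt6_cancel c (a * b) (Nat.coprime_comm.1 (hac.mul hbc)) x x'
      (y * a + z * b) (y' * a + z' * b)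
      (by rw [show x * (a * b) + (y * a + z * b) * c = x * (a * b) + y * (a * c) + z * (b * c) by ring, hw, ← hv]; ring)
      (hlt x (a * b) c (by positivity) (by omega) rfl)
      (hlt x' (a * b) c (by positivity) (by omega) rfl)
  have hy : y = y' := by
    refine stmt6_cancel b (a * c) (Nat.coprime_comm.1 (hab.mul (Nat.coprime_comm.1 hbc))) y y'
      (x * a + z * c) (x' * a + z' * c)
      (by rw [show y * (a * c) + (x * a + z * c) * b = x * (a * b) + y * (a * c) + z * (b * c) by ring, hw, ← hv]; ring)
      (hlt y (a * c) b (by positivity) (by omega) (by ring))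
      (hlt y' (a * c) b (by positivity) (by omega) (by ring))
  have hz : z = z' := by
    subst hx hy
    have h3 : z * (b * c) = z' * (b * c) := by omega
    exact Nat.eq_of_mul_eq_mul_right (by positivity) h3
  simp [hx, hy, hz]
end

section
/- Let r ≥ 1 and suppose the hyperelliptic vanishing conditions of order ≤ r−1 hold, i.e. for every i ∈ {1, …, n} and every u with 1 ≤ u ≤ r−1 the coefficient of t^{2(i+u)−1} in F*_{i,u} vanishes. Then for every finite sequence λ = (i_1, …, i_s) with entries in {1, …, n} one has the identity F*_{λ,r} = F*_{i_1,r}·f_1^{i_λ − i_1} + Σ_{q=2}^{s} ( f_{λ_{q−1}}·F*_{i_q,r}·f_1^{i_λ − i_{λ_q}} + f_1^{i_λ − i_{λ_{q−1}}}·Σ_{l=1}^{r−1} a(i_q, l)·F*_{λ_{q−1}, r−l}·f_1^{l} ) in ℂ⟦t⟧. -/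
/-- `Fstar f λ r` is the series `F*_{λ,r}`: `F*_{λ,0} = f_λ = f_{i₁}⋯f_{i_s}` and
`F*_{λ,r} = F*_{λ,r−1} − a(λ,r−1)·f₁^{i_λ+r−1}`, where `a(λ,r)` is the coefficient
of `t^{2(i_λ+r)}` in `F*_{λ,r}`. -/
noncomputable def Fstar (f : ℕ → PowerSeries ℂ) (lam : List ℕ) : ℕ → PowerSeries ℂ
  | 0 => (lam.map f).prod
  | r + 1 =>
      Fstar f lam r -
        PowerSeries.C (R := ℂ) (PowerSeries.coeff (R := ℂ) (2 * (lam.sum + r)) (Fstar f lam r)) *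
          f 1 ^ (lam.sum + r)

/-- `aCoef f λ r` is `a(λ,r)`, the coefficient of `t^{2(i_λ+r)}` in `F*_{λ,r}`. -/
noncomputable def aCoef (f : ℕ → PowerSeries ℂ) (lam : List ℕ) (r : ℕ) : ℂ :=
  PowerSeries.coeff (R := ℂ) (2 * (lam.sum + r)) (Fstar f lam r)

open PowerSeries

/-- all coefficients below `d` vanish -/
def LB (g : PowerSeries ℂ) (d : ℕ) : Prop := ∀ m, m < d → PowerSeries.coeff (R := ℂ) m g = 0

lemma LB_mul {g h : PowerSeries ℂ} {p q : ℕ} (hg : LB g p) (hh : LB h q) :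
    LB (g * h) (p + q) := by
  intro m hm
  rw [coeff_mul]
  apply Finset.sum_eq_zero
  rintro ⟨a, b⟩ hab
  rw [Finset.HasAntidiagonal.mem_antidiagonal] at hab
  rcases lt_or_ge a p with h1 | h1
  · rw [hg a h1, zero_mul]
  · rw [hh b (by omega), mul_zero]

lemma coeff_mul_LB {g h : PowerSeries ℂ} {p q : ℕ} (hg : LB g p) (hh : LB h q) :
    PowerSeries.coeff (R := ℂ) (p + q) (g * h) = PowerSeries.coeff (R := ℂ) p g * PowerSeries.coeff (R := ℂ) q h := by
  rw [coeff_mul]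
  apply Finset.sum_eq_single (p, q)
  · rintro ⟨a, b⟩ hab hne
    rw [Finset.HasAntidiagonal.mem_antidiagonal] at hab
    rcases lt_or_ge a p with h1 | h1
    · rw [hg a h1, zero_mul]
    · rcases lt_or_ge b q with h2 | h2
      · rw [hh b h2, mul_zero]
      · exfalso; apply hne
        have ha : a = p := by omega
        have hb : b = q := by omega
        simp [ha, hb]
  · intro h; exact absurd (Finset.HasAntidiagonal.mem_antidiagonal.2 (rfl : (p,q).1 + (p,q).2 = p + q)) h

lemma LB_smulC {g : PowerSeries ℂ} {d : ℕ} (a : ℂ) (hg : LB g d) :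
    LB (PowerSeries.C (R := ℂ) a * g) d := by
  intro m hm; rw [coeff_C_mul, hg m hm, mul_zero]

lemma LB_mono {g : PowerSeries ℂ} {d d' : ℕ} (h : d' ≤ d) (hg : LB g d) : LB g d' :=
  fun m hm => hg m (lt_of_lt_of_le hm h)

lemma LB_sum {s : Finset ℕ} {g : ℕ → PowerSeries ℂ} {d : ℕ}
    (h : ∀ i ∈ s, LB (g i) d) : LB (∑ i ∈ s, g i) d := by
  intro m hm
  rw [map_sum]
  exact Finset.sum_eq_zero fun i hi => h i hi m hm

lemma LB_one_pow {f : ℕ → PowerSeries ℂ} (h1low : LB (f 1) 2) (k : ℕ) :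
    LB (f 1 ^ k) (2 * k) := by
  induction k with
  | zero => intro m hm; omega
  | succ k ih =>
      have := LB_mul ih h1low
      rw [pow_succ]
      have e : 2 * (k+1) = 2*k + 2 := by ring
      rw [e]; exact this

lemma coeff_one_pow {f : ℕ → PowerSeries ℂ} (h1low : LB (f 1) 2)
    (h1lead : PowerSeries.coeff (R := ℂ) 2 (f 1) = 1) (k : ℕ) :
    PowerSeries.coeff (R := ℂ) (2 * k) (f 1 ^ k) = 1 := by
  induction k with
  | zero => simp
  | succ k ih =>
      rw [pow_succ]
      have e : 2 * (k+1) = 2*k + 2 := by ring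
      rw [e, coeff_mul_LB (LB_one_pow h1low k) h1low, ih, h1lead, one_mul]

lemma LB_prod {f : ℕ → PowerSeries ℂ} {n : ℕ}
    (hlow : ∀ i, 1 ≤ i → i ≤ n → ∀ m, m < 2 * i → PowerSeries.coeff (R := ℂ) m (f i) = 0)
    (lam : List ℕ) (hmem : ∀ i ∈ lam, 1 ≤ i ∧ i ≤ n) :
    LB ((lam.map f).prod) (2 * lam.sum) := by
  induction lam with
  | nil => intro m hm; simp at hm
  | cons a t ih =>
      have ha := hmem a (List.mem_cons_self)
      have h1 : LB (f a) (2 * a) := fun m hm => hlow a ha.1 ha.2 m hm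
      have h2 := ih (fun i hi => hmem i (List.mem_cons_of_mem a hi))
      have := LB_mul h1 h2
      simpa [List.sum_cons, Nat.mul_add] using this

lemma coeff_prod {f : ℕ → PowerSeries ℂ} {n : ℕ}
    (hlead : ∀ i, 1 ≤ i → i ≤ n → PowerSeries.coeff (R := ℂ) (2 * i) (f i) = 1)
    (hlow : ∀ i, 1 ≤ i → i ≤ n → ∀ m, m < 2 * i → PowerSeries.coeff (R := ℂ) m (f i) = 0)
    (lam : List ℕ) (hmem : ∀ i ∈ lam, 1 ≤ i ∧ i ≤ n) :
    PowerSeries.coeff (R := ℂ) (2 * lam.sum) ((lam.map f).prod) = 1 := by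
  induction lam with
  | nil => simp
  | cons a t ih =>
      have ha := hmem a (List.mem_cons_self)
      have h1 : LB (f a) (2 * a) := fun m hm => hlow a ha.1 ha.2 m hm
      have h2 := LB_prod hlow t (fun i hi => hmem i (List.mem_cons_of_mem a hi))
      have e : 2 * (a :: t).sum = 2*a + 2*t.sum := by simp [List.sum_cons]; ring
      rw [List.map_cons, List.prod_cons, e, coeff_mul_LB h1 h2,
        hlead a ha.1 ha.2, ih (fun i hi => hmem i (List.mem_cons_of_mem a hi)), one_mul]

lemma aCoef_zero {f : ℕ → PowerSeries ℂ} {n : ℕ}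
    (hlead : ∀ i, 1 ≤ i → i ≤ n → PowerSeries.coeff (R := ℂ) (2 * i) (f i) = 1)
    (hlow : ∀ i, 1 ≤ i → i ≤ n → ∀ m, m < 2 * i → PowerSeries.coeff (R := ℂ) m (f i) = 0)
    (lam : List ℕ) (hmem : ∀ i ∈ lam, 1 ≤ i ∧ i ≤ n) :
    aCoef f lam 0 = 1 := by
  show PowerSeries.coeff (R := ℂ) (2 * (lam.sum + 0)) ((lam.map f).prod) = 1
  rw [Nat.add_zero]
  exact coeff_prod hlead hlow lam hmem

lemma van_single {f : ℕ → PowerSeries ℂ} {n r : ℕ}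
    (h1low : LB (f 1) 2) (h1lead : PowerSeries.coeff (R := ℂ) 2 (f 1) = 1)
    (hlow : ∀ i, 1 ≤ i → i ≤ n → ∀ m, m < 2 * i → PowerSeries.coeff (R := ℂ) m (f i) = 0)
    (hvanish : ∀ i, 1 ≤ i → i ≤ n → ∀ u, 1 ≤ u → u ≤ r - 1 →
      PowerSeries.coeff (R := ℂ) (2 * (i + u) - 1) (Fstar f [i] u) = 0)
    (i : ℕ) (hi1 : 1 ≤ i) (hi2 : i ≤ n) :
    ∀ u, u ≤ r - 1 → LB (Fstar f [i] u) (2 * (i + u)) := by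
  intro u
  induction u with
  | zero =>
      intro _ m hm
      show PowerSeries.coeff (R := ℂ) m (([i].map f).prod) = 0
      simp only [List.map_cons, List.map_nil, List.prod_cons, List.prod_nil, mul_one]
      exact hlow i hi1 hi2 m (by omega)
  | succ u ih =>
      intro hu m hm
      have ih' := ih (by omega)
      have hsum : ([i] : List ℕ).sum = i := by simp
      rcases lt_trichotomy m (2 * (i + u)) with h | h | h
      · show PowerSeries.coeff (R := ℂ) m (Fstar f [i] u -
          PowerSeries.C (R := ℂ) (PowerSeries.coeff (R := ℂ) (2 * ([i].sum + u)) (Fstar f [i] u)) *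
            f 1 ^ ([i].sum + u)) = 0
        rw [map_sub, ih' m h, coeff_C_mul, hsum, LB_one_pow h1low (i + u) m (by omega)]
        ring
      · show PowerSeries.coeff (R := ℂ) m (Fstar f [i] u -
          PowerSeries.C (R := ℂ) (PowerSeries.coeff (R := ℂ) (2 * ([i].sum + u)) (Fstar f [i] u)) *
            f 1 ^ ([i].sum + u)) = 0
        subst h
        rw [map_sub, coeff_C_mul, hsum, coeff_one_pow h1low h1lead (i+u), mul_one, sub_self]
      · have hv := hvanish i hi1 hi2 (u + 1) (by omega) hu
        have e : 2 * (i + (u + 1)) - 1 = m := by omega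
        rw [e] at hv
        exact hv

lemma master {f : ℕ → PowerSeries ℂ} {n r : ℕ}
    (h1low : LB (f 1) 2) (h1lead : PowerSeries.coeff (R := ℂ) 2 (f 1) = 1)
    (hlead : ∀ i, 1 ≤ i → i ≤ n → PowerSeries.coeff (R := ℂ) (2 * i) (f i) = 1)
    (hlow : ∀ i, 1 ≤ i → i ≤ n → ∀ m, m < 2 * i → PowerSeries.coeff (R := ℂ) m (f i) = 0)
    (hvanish : ∀ i, 1 ≤ i → i ≤ n → ∀ u, 1 ≤ u → u ≤ r - 1 →
      PowerSeries.coeff (R := ℂ) (2 * (i + u) - 1) (Fstar f [i] u) = 0) :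
    ∀ u, (u ≤ r - 1 → ∀ lam, lam ≠ [] → (∀ i ∈ lam, 1 ≤ i ∧ i ≤ n) →
            LB (Fstar f lam u) (2 * (lam.sum + u)))
       ∧ (1 ≤ u → u ≤ r → ∀ μ j, μ ≠ [] → (∀ i ∈ μ, 1 ≤ i ∧ i ≤ n) → 1 ≤ j → j ≤ n →
            Fstar f (μ ++ [j]) u = Fstar f μ u * f 1 ^ j
              + (μ.map f).prod * Fstar f [j] u
              + f 1 ^ j * ∑ l ∈ Finset.Icc 1 (u - 1),
                  PowerSeries.C (R := ℂ) (aCoef f [j] l) * Fstar f μ (u - l) * f 1 ^ l) := by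
  intro u
  induction u using Nat.strong_induction_on with
  | _ u IH =>
  have key : 1 ≤ u → u ≤ r → ∀ μ j, μ ≠ [] → (∀ i ∈ μ, 1 ≤ i ∧ i ≤ n) → 1 ≤ j → j ≤ n →
      Fstar f (μ ++ [j]) u = Fstar f μ u * f 1 ^ j
        + (μ.map f).prod * Fstar f [j] u
        + f 1 ^ j * ∑ l ∈ Finset.Icc 1 (u - 1),
            PowerSeries.C (R := ℂ) (aCoef f [j] l) * Fstar f μ (u - l) * f 1 ^ l := by
    intro hu1 hur μ j hneμ hmemμ hj1 hj2
    have hmemj : ∀ i ∈ [j], 1 ≤ i ∧ i ≤ n := by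
      intro i hi; simp at hi; subst hi; exact ⟨hj1, hj2⟩
    have hmem' : ∀ i ∈ μ ++ [j], 1 ≤ i ∧ i ≤ n := by
      intro i hi
      rcases List.mem_append.1 hi with h | h
      exacts [hmemμ i h, hmemj i h]
    have hs : (μ ++ [j]).sum = μ.sum + j := by simp
    have hsj : ([j] : List ℕ).sum = j := by simp
    rcases u with _ | _ | w
    · omega
    · -- base case u = 1
      have hIcc : Finset.Icc 1 (1 - 1) = (∅ : Finset ℕ) := by simp
      rw [show Fstar f (μ ++ [j]) 1 = ((μ ++ [j]).map f).prod
            - PowerSeries.C (R := ℂ) (aCoef f (μ ++ [j]) 0) * f 1 ^ ((μ ++ [j]).sum + 0) from rfl,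
          show Fstar f μ 1 = (μ.map f).prod
            - PowerSeries.C (R := ℂ) (aCoef f μ 0) * f 1 ^ (μ.sum + 0) from rfl,
          show Fstar f [j] 1 = ([j].map f).prod
            - PowerSeries.C (R := ℂ) (aCoef f [j] 0) * f 1 ^ ([j].sum + 0) from rfl,
          aCoef_zero hlead hlow _ hmem', aCoef_zero hlead hlow _ hmemμ,
          aCoef_zero hlead hlow _ hmemj, map_one, hs, hsj, hIcc, Finset.sum_empty,
          List.map_append, List.prod_append]
      ring
    · -- step case u = w + 2
      have hKv := (IH (w + 1) (by omega)).2 (by omega) (by omega) μ j hneμ hmemμ hj1 hj2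
      rw [show w + 1 - 1 = w from rfl] at hKv
      have hVmu : ∀ t, t ≤ w + 1 → LB (Fstar f μ t) (2 * (μ.sum + t)) := by
        intro t ht
        exact (IH t (by omega)).1 (by omega) μ hneμ hmemμ
      have hVj : ∀ t, t ≤ w + 1 → LB (Fstar f [j] t) (2 * (j + t)) := by
        intro t ht
        exact van_single h1low h1lead hlow hvanish j hj1 hj2 t (by omega)
      have hA : aCoef f (μ ++ [j]) (w + 1) = aCoef f μ (w + 1) + aCoef f [j] (w + 1)
          + ∑ l ∈ Finset.Icc 1 w, aCoef f [j] l * aCoef f μ (w + 1 - l) := by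
        show PowerSeries.coeff (R := ℂ) (2 * ((μ ++ [j]).sum + (w + 1))) (Fstar f (μ ++ [j]) (w + 1)) = _
        rw [hKv, hs, map_add, map_add]
        have c1 : PowerSeries.coeff (R := ℂ) (2 * (μ.sum + j + (w + 1)))
            (Fstar f μ (w + 1) * f 1 ^ j) = aCoef f μ (w + 1) := by
          have e1 : 2 * (μ.sum + j + (w + 1)) = 2 * (μ.sum + (w + 1)) + 2 * j := by ring
          rw [e1, coeff_mul_LB (hVmu (w + 1) le_rfl) (LB_one_pow h1low j),
            coeff_one_pow h1low h1lead, mul_one]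
          rfl
        have c2 : PowerSeries.coeff (R := ℂ) (2 * (μ.sum + j + (w + 1)))
            ((μ.map f).prod * Fstar f [j] (w + 1)) = aCoef f [j] (w + 1) := by
          have e2 : 2 * (μ.sum + j + (w + 1)) = 2 * μ.sum + 2 * (j + (w + 1)) := by ring
          rw [e2, coeff_mul_LB (LB_prod hlow μ hmemμ) (hVj (w + 1) le_rfl),
            coeff_prod hlead hlow μ hmemμ, one_mul]
          show _ = PowerSeries.coeff (R := ℂ) (2 * ([j].sum + (w + 1))) (Fstar f [j] (w + 1))
          rw [hsj]
        have c3 : PowerSeries.coeff (R := ℂ) (2 * (μ.sum + j + (w + 1)))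
            (f 1 ^ j * ∑ l ∈ Finset.Icc 1 w,
              PowerSeries.C (R := ℂ) (aCoef f [j] l) * Fstar f μ (w + 1 - l) * f 1 ^ l)
            = ∑ l ∈ Finset.Icc 1 w, aCoef f [j] l * aCoef f μ (w + 1 - l) := by
          rw [Finset.mul_sum, map_sum]
          apply Finset.sum_congr rfl
          intro l hl
          rw [Finset.mem_Icc] at hl
          have hLB2 : LB (PowerSeries.C (R := ℂ) (aCoef f [j] l) * Fstar f μ (w + 1 - l) * f 1 ^ l)
              (2 * (μ.sum + (w + 1 - l)) + 2 * l) :=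
            LB_mul (LB_smulC _ (hVmu (w + 1 - l) (by omega))) (LB_one_pow h1low l)
          have e3 : 2 * (μ.sum + j + (w + 1))
              = 2 * j + (2 * (μ.sum + (w + 1 - l)) + 2 * l) := by omega
          rw [e3, coeff_mul_LB (LB_one_pow h1low j) hLB2, coeff_one_pow h1low h1lead, one_mul,
            coeff_mul_LB (LB_smulC _ (hVmu (w + 1 - l) (by omega))) (LB_one_pow h1low l),
            coeff_one_pow h1low h1lead, mul_one, coeff_C_mul]
          rfl
        rw [c1, c2, c3]
      have hsplit : ∑ l ∈ Finset.Icc 1 (w + 1),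
            PowerSeries.C (R := ℂ) (aCoef f [j] l) * Fstar f μ (w + 1 + 1 - l) * f 1 ^ l
          = (∑ l ∈ Finset.Icc 1 w,
                PowerSeries.C (R := ℂ) (aCoef f [j] l) * Fstar f μ (w + 1 - l) * f 1 ^ l)
            - PowerSeries.C (R := ℂ) (∑ l ∈ Finset.Icc 1 w, aCoef f [j] l * aCoef f μ (w + 1 - l))
                * f 1 ^ (μ.sum + (w + 1))
            + PowerSeries.C (R := ℂ) (aCoef f [j] (w + 1)) * Fstar f μ 1 * f 1 ^ (w + 1) := by
        rw [Finset.sum_Icc_succ_top (by omega), show w + 1 + 1 - (w + 1) = 1 from by omega]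
        rw [map_sum, Finset.sum_mul, ← Finset.sum_sub_distrib]
        congr 1
        apply Finset.sum_congr rfl
        intro l hl
        rw [Finset.mem_Icc] at hl
        rw [show w + 1 + 1 - l = (w + 1 - l) + 1 from by omega,
          show Fstar f μ (w + 1 - l + 1) = Fstar f μ (w + 1 - l)
            - PowerSeries.C (R := ℂ) (aCoef f μ (w + 1 - l)) * f 1 ^ (μ.sum + (w + 1 - l)) from rfl,
          show μ.sum + (w + 1) = (μ.sum + (w + 1 - l)) + l from by omega, pow_add, map_mul]
        ring
      rw [show Fstar f (μ ++ [j]) (w + 1 + 1) = Fstar f (μ ++ [j]) (w + 1)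
            - PowerSeries.C (R := ℂ) (aCoef f (μ ++ [j]) (w + 1)) * f 1 ^ ((μ ++ [j]).sum + (w + 1))
            from rfl,
          show Fstar f μ (w + 1 + 1) = Fstar f μ (w + 1)
            - PowerSeries.C (R := ℂ) (aCoef f μ (w + 1)) * f 1 ^ (μ.sum + (w + 1)) from rfl,
          show Fstar f [j] (w + 1 + 1) = Fstar f [j] (w + 1)
            - PowerSeries.C (R := ℂ) (aCoef f [j] (w + 1)) * f 1 ^ ([j].sum + (w + 1)) from rfl,
          show w + 1 + 1 - 1 = w + 1 from rfl, hsplit, hKv, hA, hs, hsj, map_add, map_add,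
          show Fstar f μ 1 = (μ.map f).prod
            - PowerSeries.C (R := ℂ) (aCoef f μ 0) * f 1 ^ (μ.sum + 0) from rfl,
          aCoef_zero hlead hlow _ hmemμ, map_one]
      ring
  refine ⟨?_, key⟩
  intro hu lam
  induction lam using List.reverseRecOn with
  | nil => intro hne _; exact absurd rfl hne
  | append_singleton μ j ihμ =>
    intro _ hmem
    have hj := hmem j (by simp)
    have hmemμ : ∀ i ∈ μ, 1 ≤ i ∧ i ≤ n := fun i hi => hmem i (by simp [hi])
    have hsum : (μ ++ [j]).sum = μ.sum + j := by simp
    rcases Nat.eq_zero_or_pos u with rfl | hu1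
    · intro m hm
      exact LB_prod hlow (μ ++ [j]) hmem m (by omega)
    · rcases eq_or_ne μ [] with rfl | hneμ
      · intro m hm
        have hm' : m < 2 * (j + u) := by
          have h0 : (([] : List ℕ) ++ [j]).sum = j := by simp
          omega
        exact van_single h1low h1lead hlow hvanish j hj.1 hj.2 u hu m hm'
      · have hKu := key hu1 (by omega) μ j hneμ hmemμ hj.1 hj.2
        rw [hKu]
        have L1 : LB (Fstar f μ u * f 1 ^ j) (2 * (μ.sum + u) + 2 * j) :=
          LB_mul (ihμ hneμ hmemμ) (LB_one_pow h1low j)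
        have L2 : LB ((μ.map f).prod * Fstar f [j] u) (2 * μ.sum + 2 * (j + u)) :=
          LB_mul (LB_prod hlow μ hmemμ)
            (van_single h1low h1lead hlow hvanish j hj.1 hj.2 u hu)
        have L3 : LB (f 1 ^ j * ∑ l ∈ Finset.Icc 1 (u - 1),
              PowerSeries.C (R := ℂ) (aCoef f [j] l) * Fstar f μ (u - l) * f 1 ^ l)
            (2 * j + 2 * (μ.sum + u)) := by
          apply LB_mul (LB_one_pow h1low j)
          apply LB_sum
          intro l hl
          rw [Finset.mem_Icc] at hl
          have hV : LB (Fstar f μ (u - l)) (2 * (μ.sum + (u - l))) :=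
            (IH (u - l) (by omega)).1 (by omega) μ hneμ hmemμ
          exact LB_mono (by omega)
            (LB_mul (LB_smulC _ hV) (LB_one_pow h1low l))
        intro m hm
        rw [hsum] at hm
        rw [map_add, map_add, L1 m (by omega), L2 m (by omega), L3 m (by omega)]
        ring

lemma getD_le_sum (mu : List ℕ) (h : mu ≠ []) : mu.getD 0 0 ≤ mu.sum := by
  cases mu with
  | nil => simp at h
  | cons a t => simp [List.getD]

lemma take_sum_le (mu : List ℕ) (k : ℕ) : (mu.take k).sum ≤ mu.sum := by
  have h : (mu.take k).sum + (mu.drop k).sum = mu.sum := by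
    rw [← List.sum_append, List.take_append_drop]
  omega

/-- if the hyperelliptic vanishing conditions of order `≤ r−1` hold
(the coefficient of `t^{2(i+u)−1}` in `F*_{i,u}` vanishes for `1 ≤ i ≤ n`,
`1 ≤ u ≤ r−1`), then for every nonempty sequence `λ = (i₁,…,i_s)` with entries in
`{1,…,n}` one has
`F*_{λ,r} = F*_{i₁,r}·f₁^{i_λ−i₁} + Σ_{q=2}^{s} ( f_{λ_{q−1}}·F*_{i_q,r}·f₁^{i_λ−i_{λ_q}}
 + f₁^{i_λ−i_{λ_{q−1}}}·Σ_{l=1}^{r−1} a(i_q,l)·F*_{λ_{q−1},r−l}·f₁^{l} )`. -/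
theorem stmt_8 (n : ℕ) (hn : 1 ≤ n) (f : ℕ → PowerSeries ℂ)
    (hlead : ∀ i, 1 ≤ i → i ≤ n → PowerSeries.coeff (R := ℂ) (2 * i) (f i) = 1)
    (hlow : ∀ i, 1 ≤ i → i ≤ n → ∀ m, m < 2 * i → PowerSeries.coeff (R := ℂ) m (f i) = 0)
    (r : ℕ) (hr : 1 ≤ r)
    (hvanish : ∀ i, 1 ≤ i → i ≤ n → ∀ u, 1 ≤ u → u ≤ r - 1 →
      PowerSeries.coeff (R := ℂ) (2 * (i + u) - 1) (Fstar f [i] u) = 0)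
    (lam : List ℕ) (hne : lam ≠ [])
    (hmem : ∀ i ∈ lam, 1 ≤ i ∧ i ≤ n) :
    Fstar f lam r =
      Fstar f [lam.getD 0 0] r * f 1 ^ (lam.sum - lam.getD 0 0) +
        ∑ q ∈ Finset.Icc 2 lam.length,
          (((lam.take (q - 1)).map f).prod * Fstar f [lam.getD (q - 1) 0] r *
              f 1 ^ (lam.sum - (lam.take q).sum) +
            f 1 ^ (lam.sum - (lam.take (q - 1)).sum) *
              ∑ l ∈ Finset.Icc 1 (r - 1),
                PowerSeries.C (R := ℂ) (aCoef f [lam.getD (q - 1) 0] l) *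
                  Fstar f (lam.take (q - 1)) (r - l) * f 1 ^ l) := by
  have h1low : LB (f 1) 2 := fun m hm => hlow 1 le_rfl hn m (by omega)
  have h1lead : PowerSeries.coeff (R := ℂ) 2 (f 1) = 1 := by
    have := hlead 1 le_rfl hn; simpa using this
  have key := fun (μ : List ℕ) (j : ℕ) h1 h2 h3 h4 =>
    (master h1low h1lead hlead hlow hvanish r).2 hr le_rfl μ j h1 h2 h3 h4
  revert hne hmem
  induction lam using List.reverseRecOn with
  | nil => intro hne _; exact absurd rfl hne
  | append_singleton μ j ihμ =>
    intro _ hmem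
    have hj := hmem j (by simp)
    have hmemμ : ∀ i ∈ μ, 1 ≤ i ∧ i ≤ n := fun i hi => hmem i (by simp [hi])
    have hsum : (μ ++ [j]).sum = μ.sum + j := by simp
    rcases eq_or_ne μ [] with rfl | hneμ
    · simp [List.getD]
    · have hlenpos : 0 < μ.length := List.length_pos_iff.2 hneμ
      rw [key μ j hneμ hmemμ hj.1 hj.2, ihμ hneμ hmemμ]
      have hcongr : (∑ q ∈ Finset.Icc 2 μ.length,
          ((((μ ++ [j]).take (q - 1)).map f).prod * Fstar f [(μ ++ [j]).getD (q - 1) 0] r *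
              f 1 ^ ((μ ++ [j]).sum - ((μ ++ [j]).take q).sum) +
            f 1 ^ ((μ ++ [j]).sum - ((μ ++ [j]).take (q - 1)).sum) *
              ∑ l ∈ Finset.Icc 1 (r - 1),
                PowerSeries.C (R := ℂ) (aCoef f [(μ ++ [j]).getD (q - 1) 0] l) *
                  Fstar f ((μ ++ [j]).take (q - 1)) (r - l) * f 1 ^ l))
        = (∑ q ∈ Finset.Icc 2 μ.length,
          (((μ.take (q - 1)).map f).prod * Fstar f [μ.getD (q - 1) 0] r *
              f 1 ^ (μ.sum - (μ.take q).sum) +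
            f 1 ^ (μ.sum - (μ.take (q - 1)).sum) *
              ∑ l ∈ Finset.Icc 1 (r - 1),
                PowerSeries.C (R := ℂ) (aCoef f [μ.getD (q - 1) 0] l) *
                  Fstar f (μ.take (q - 1)) (r - l) * f 1 ^ l)) * f 1 ^ j := by
        rw [Finset.sum_mul]
        apply Finset.sum_congr rfl
        intro q hq
        rw [Finset.mem_Icc] at hq
        rw [List.take_append_of_le_length (show q - 1 ≤ μ.length by omega),
          List.take_append_of_le_length (show q ≤ μ.length by omega),
          List.getD_append _ _ _ _ (show q - 1 < μ.length by omega), hsum,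
          show μ.sum + j - (μ.take q).sum = (μ.sum - (μ.take q).sum) + j from by
            have := take_sum_le μ q; omega,
          show μ.sum + j - (μ.take (q - 1)).sum = (μ.sum - (μ.take (q - 1)).sum) + j from by
            have := take_sum_le μ (q - 1); omega,
          pow_add, pow_add]
        ring
      rw [show (μ ++ [j]).length = μ.length + 1 from by simp,
        Finset.sum_Icc_succ_top (show 2 ≤ μ.length + 1 by omega), hcongr,
        show μ.length + 1 - 1 = μ.length from rfl, List.take_left,
        show (μ ++ [j]).getD μ.length 0 = j from by
          simp [List.getD, List.getElem?_append_right],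
        show (μ ++ [j]).take (μ.length + 1) = μ ++ [j] from by simp,
        List.getD_append _ _ _ _ hlenpos, hsum,
        show μ.sum + j - (μ.sum + j) = 0 from by omega, pow_zero, mul_one,
        show μ.sum + j - μ.sum = j from by omega,
        show μ.sum + j - μ.getD 0 0 = (μ.sum - μ.getD 0 0) + j from by
          have := getD_le_sum μ hneμ; omega,
        pow_add]
      ring
end

section
/- Let r ≥ 1 and suppose the hyperelliptic vanishing conditions of order ≤ r hold, i.e. for every i ∈ {1, …, n} and every u with 1 ≤ u ≤ r the coefficient of t^{2(i+u)−1} in F*_{i,u} vanishes. Then for every finite sequence λ = (i_1, …, i_s) with entries in {1, …, n}, the series F*_{λ,r} has t-adic order at least 2(i_λ + r): the coefficient of t^m in F*_{λ,r} vanishes for every m < 2(i_λ + r). In particular the coefficient of t^{2(i_λ + r) − 1} in F*_{λ,r} vanishes, so non-singleton sequences λ produce no conditions beyond those coming from singletons. -/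
namespace Stmt11Aux

open PowerSeries Finset

lemma pow_dvd {g : PowerSeries ℂ} (h : (X : PowerSeries ℂ) ^ 2 ∣ g) (k : ℕ) :
    (X : PowerSeries ℂ) ^ (2 * k) ∣ g ^ k := by
  rw [pow_mul]
  exact pow_dvd_pow_of_dvd h k

lemma coeff_pow_low {g : PowerSeries ℂ} (h : (X : PowerSeries ℂ) ^ 2 ∣ g) {k m : ℕ}
    (hm : m < 2 * k) : coeff (R := ℂ) m (g ^ k) = 0 :=
  X_pow_dvd_iff.mp (pow_dvd h k) m hm

lemma coeff_pow_lead {g : PowerSeries ℂ} (h : (X : PowerSeries ℂ) ^ 2 ∣ g) (k : ℕ) :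
    coeff (R := ℂ) (2 * k) (g ^ k) = (coeff (R := ℂ) 2 g) ^ k := by
  obtain ⟨p, rfl⟩ := h
  have h1 : (X : PowerSeries ℂ) ^ 2 * p = X ^ 2 * p := rfl
  have h2 : coeff (R := ℂ) 2 ((X : PowerSeries ℂ) ^ 2 * p) = coeff (R := ℂ) 0 p := by
    have := coeff_X_pow_mul p 2 0
    simpa using this
  have h3 : ((X : PowerSeries ℂ) ^ 2 * p) ^ k = X ^ (2 * k) * p ^ k := by
    rw [mul_pow, ← pow_mul]
  rw [h3, h2]
  have := coeff_X_pow_mul (p ^ k) (2 * k) 0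
  simp only [zero_add] at this
  rw [this]
  simp [coeff_zero_eq_constantCoeff, map_pow]

/-- Telescoping: `F*_{λ,r} = f_λ - ∑_{u<r} a(λ,u) f₁^{i_λ+u}`. -/
lemma Fstar_eq (f : ℕ → PowerSeries ℂ) (lam : List ℕ) (r : ℕ) :
    Fstar f lam r = (lam.map f).prod -
      ∑ u ∈ Finset.range r,
        PowerSeries.C (R := ℂ) (PowerSeries.coeff (R := ℂ) (2 * (lam.sum + u)) (Fstar f lam u)) *
          f 1 ^ (lam.sum + u) := by
  induction r with
  | zero => simp [Fstar]
  | succ r ih =>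
      rw [show Fstar f lam (r + 1) = Fstar f lam r -
            PowerSeries.C (R := ℂ) (PowerSeries.coeff (R := ℂ) (2 * (lam.sum + r)) (Fstar f lam r)) *
              f 1 ^ (lam.sum + r) from rfl, Finset.sum_range_succ, ih]
      ring

end Stmt11Aux

open PowerSeries Finset Stmt11Aux in
/-- if the hyperelliptic vanishing conditions of order `≤ r` hold,
then for every nonempty sequence `λ = (i₁,…,i_s)` with entries in `{1,…,n}` the
series `F*_{λ,r}` has `t`-adic order at least `2(i_λ + r)`: all coefficients of
`t^m` with `m < 2(i_λ + r)` vanish (in particular that of `t^{2(i_λ+r)−1}`). -/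
theorem stmt_11 (n : ℕ) (hn : 1 ≤ n) (f : ℕ → PowerSeries ℂ)
    (hlead : ∀ i, 1 ≤ i → i ≤ n → PowerSeries.coeff (R := ℂ) (2 * i) (f i) = 1)
    (hlow : ∀ i, 1 ≤ i → i ≤ n → ∀ m, m < 2 * i → PowerSeries.coeff (R := ℂ) m (f i) = 0)
    (r : ℕ) (hr : 1 ≤ r)
    (hvanish : ∀ i, 1 ≤ i → i ≤ n → ∀ u, 1 ≤ u → u ≤ r →
      PowerSeries.coeff (R := ℂ) (2 * (i + u) - 1) (Fstar f [i] u) = 0)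
    (lam : List ℕ) (hne : lam ≠ [])
    (hmem : ∀ i ∈ lam, 1 ≤ i ∧ i ≤ n) :
    ∀ m, m < 2 * (lam.sum + r) → PowerSeries.coeff (R := ℂ) m (Fstar f lam r) = 0 := by
  -- basic facts about f 1
  have hf1dvd : (X : PowerSeries ℂ) ^ 2 ∣ f 1 := by
    rw [X_pow_dvd_iff]
    intro m hm
    exact hlow 1 le_rfl hn m (by omega)
  have hf1lead : coeff (R := ℂ) 2 (f 1) = 1 := by simpa using hlead 1 le_rfl hn
  have hpowlead : ∀ k : ℕ, coeff (R := ℂ) (2 * k) (f 1 ^ k) = 1 := by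
    intro k; rw [coeff_pow_lead hf1dvd, hf1lead, one_pow]
  -- singleton lemma
  have single : ∀ i, 1 ≤ i → i ≤ n → ∀ u, u ≤ r →
      ∀ m, m < 2 * (i + u) → coeff (R := ℂ) m (Fstar f [i] u) = 0 := by
    intro i hi1 hin u
    induction u with
    | zero =>
        intro _ m hm
        have : Fstar f [i] 0 = f i := by simp [Fstar]
        rw [this]
        exact hlow i hi1 hin m (by omega)
    | succ u ih =>
        intro hur m hm
        have hur' : u ≤ r := by omega
        rcases Nat.lt_or_ge m (2 * (i + u) + 1) with hm' | hm'
        · have hsum : ([i] : List ℕ).sum = i := by simp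
          rw [show Fstar f [i] (u + 1) = Fstar f [i] u -
                PowerSeries.C (R := ℂ) (coeff (R := ℂ) (2 * (([i] : List ℕ).sum + u)) (Fstar f [i] u)) *
                  f 1 ^ (([i] : List ℕ).sum + u) from rfl, hsum]
          rw [map_sub]
          rcases Nat.lt_or_ge m (2 * (i + u)) with hm'' | hm''
          · rw [ih hur' m hm'', coeff_C_mul,
              coeff_pow_low hf1dvd (show m < 2 * (i + u) from hm''), mul_zero, sub_zero]
          · have hme : m = 2 * (i + u) := by omega
            subst hme
            rw [coeff_C_mul, hpowlead (i + u), mul_one, sub_self]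
        · have hme : m = 2 * (i + u) + 1 := by omega
          have := hvanish i hi1 hin (u + 1) (by omega) hur
          rw [show 2 * (i + (u + 1)) - 1 = 2 * (i + u) + 1 by omega] at this
          rw [hme]; exact this
  -- `Good k g`: g agrees with `f₁^k · P(f₁)` for some polynomial `P`, up to order `2(k+r)`.
  set f1 := f 1 with hf1
  have good_mul : ∀ (k k' : ℕ) (g g' : PowerSeries ℂ),
      (∃ P : Polynomial ℂ, (X : PowerSeries ℂ) ^ (2 * (k + r)) ∣ g - f1 ^ k * Polynomial.aeval f1 P) →
      (∃ P : Polynomial ℂ, (X : PowerSeries ℂ) ^ (2 * (k' + r)) ∣ g' - f1 ^ k' * Polynomial.aeval f1 P) →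
      (∃ P : Polynomial ℂ, (X : PowerSeries ℂ) ^ (2 * (k + k' + r)) ∣ g * g' - f1 ^ (k + k') * Polynomial.aeval f1 P) := by
    rintro k k' g g' ⟨P, hP⟩ ⟨P', hP'⟩
    refine ⟨P * P', ?_⟩
    set A := f1 ^ k * Polynomial.aeval f1 P with hA
    set A' := f1 ^ k' * Polynomial.aeval f1 P' with hA'
    have key : g * g' - f1 ^ (k + k') * Polynomial.aeval f1 (P * P')
        = (g - A) * g' + A * (g' - A') := by
      rw [map_mul, pow_add]; ring
    rw [key]
    have hg' : (X : PowerSeries ℂ) ^ (2 * k') ∣ g' := by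
      have h1 : (X : PowerSeries ℂ) ^ (2 * k') ∣ g' - A' :=
        dvd_trans (pow_dvd_pow _ (by omega)) hP'
      have h2 : (X : PowerSeries ℂ) ^ (2 * k') ∣ A' :=
        Dvd.dvd.mul_right (pow_dvd hf1dvd k') _
      simpa using dvd_add h1 h2
    have hA2 : (X : PowerSeries ℂ) ^ (2 * k) ∣ A := Dvd.dvd.mul_right (pow_dvd hf1dvd k) _
    refine dvd_add ?_ ?_
    · have := mul_dvd_mul hP hg'
      rw [← pow_add] at this
      exact dvd_trans (pow_dvd_pow _ (by omega)) this
    · have := mul_dvd_mul hA2 hP'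
      rw [← pow_add] at this
      exact dvd_trans (pow_dvd_pow _ (by omega)) this
  -- Good holds for f i with i valid
  have good_f : ∀ i, 1 ≤ i → i ≤ n →
      ∃ P : Polynomial ℂ, (X : PowerSeries ℂ) ^ (2 * (i + r)) ∣ f i - f1 ^ i * Polynomial.aeval f1 P := by
    intro i hi1 hin
    refine ⟨∑ u ∈ Finset.range r,
      Polynomial.C (coeff (R := ℂ) (2 * (i + u)) (Fstar f [i] u)) * Polynomial.X ^ u, ?_⟩
    have heval : f1 ^ i * Polynomial.aeval f1 (∑ u ∈ Finset.range r,
        Polynomial.C (coeff (R := ℂ) (2 * (i + u)) (Fstar f [i] u)) * Polynomial.X ^ u)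
        = ∑ u ∈ Finset.range r,
            PowerSeries.C (R := ℂ) (coeff (R := ℂ) (2 * (i + u)) (Fstar f [i] u)) * f1 ^ (i + u) := by
      rw [map_sum, Finset.mul_sum]
      refine Finset.sum_congr rfl fun u _ => ?_
      rw [map_mul, Polynomial.aeval_C, map_pow, Polynomial.aeval_X, pow_add]
      rw [PowerSeries.algebraMap_apply]
      simp only [Algebra.algebraMap_self, RingHom.id_apply]
      ring
    rw [heval]
    have := Fstar_eq f [i] r
    simp only [List.map_cons, List.map_nil, List.prod_cons, List.prod_nil, mul_one,
      List.sum_cons, List.sum_nil, add_zero] at this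
    rw [← hf1] at this
    rw [← this]
    rw [X_pow_dvd_iff]
    exact fun m hm => single i hi1 hin r le_rfl m hm
  -- Good holds for products over lists
  have good_list : ∀ l : List ℕ, (∀ i ∈ l, 1 ≤ i ∧ i ≤ n) →
      ∃ P : Polynomial ℂ, (X : PowerSeries ℂ) ^ (2 * (l.sum + r)) ∣
        (l.map f).prod - f1 ^ l.sum * Polynomial.aeval f1 P := by
    intro l
    induction l with
    | nil =>
        intro _
        exact ⟨1, by simp⟩
    | cons i t ih =>
        intro hmem'
        have hi := hmem' i List.mem_cons_self
        have ht := ih fun j hj => hmem' j (List.mem_cons_of_mem i hj)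
        have := good_mul i t.sum (f i) ((t.map f).prod) (good_f i hi.1 hi.2) ht
        simpa using this
  -- main argument
  obtain ⟨P, hP⟩ := good_list lam hmem
  set S := lam.sum with hS
  -- convert the polynomial into an explicit sum with coefficients, truncated below r
  set M := max (P.natDegree + 1) r with hM
  have hPM : P.natDegree < M := lt_of_lt_of_le (Nat.lt_succ_self _) (le_max_left _ _)
  have heval : f1 ^ S * Polynomial.aeval f1 P
      = ∑ u ∈ Finset.range M, PowerSeries.C (R := ℂ) (P.coeff u) * f1 ^ (S + u) := by
    rw [Polynomial.aeval_eq_sum_range' hPM, Finset.mul_sum]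
    refine Finset.sum_congr rfl fun u _ => ?_
    rw [PowerSeries.smul_eq_C_mul, pow_add]
    ring
  have hsplit : ∑ u ∈ Finset.range M, PowerSeries.C (R := ℂ) (P.coeff u) * f1 ^ (S + u)
      = (∑ u ∈ Finset.range r, PowerSeries.C (R := ℂ) (P.coeff u) * f1 ^ (S + u))
        + ∑ u ∈ Finset.Ico r M, PowerSeries.C (R := ℂ) (P.coeff u) * f1 ^ (S + u) := by
    rw [Finset.range_eq_Ico, Finset.range_eq_Ico]
    exact (Finset.sum_Ico_consecutive _ (Nat.zero_le r) (le_max_right _ _)).symm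
  have htail : (X : PowerSeries ℂ) ^ (2 * (S + r)) ∣
      ∑ u ∈ Finset.Ico r M, PowerSeries.C (R := ℂ) (P.coeff u) * f1 ^ (S + u) := by
    refine Finset.dvd_sum fun u hu => ?_
    have hru : r ≤ u := (Finset.mem_Ico.mp hu).1
    refine Dvd.dvd.mul_left ?_ _
    exact dvd_trans (pow_dvd_pow _ (by omega)) (pow_dvd hf1dvd (S + u))
  have hbase : (X : PowerSeries ℂ) ^ (2 * (S + r)) ∣
      (lam.map f).prod - ∑ u ∈ Finset.range r, PowerSeries.C (R := ℂ) (P.coeff u) * f1 ^ (S + u) := by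
    have : (lam.map f).prod - ∑ u ∈ Finset.range r, PowerSeries.C (R := ℂ) (P.coeff u) * f1 ^ (S + u)
        = ((lam.map f).prod - f1 ^ S * Polynomial.aeval f1 P)
          + ∑ u ∈ Finset.Ico r M, PowerSeries.C (R := ℂ) (P.coeff u) * f1 ^ (S + u) := by
      rw [heval, hsplit]; ring
    rw [this]
    exact dvd_add hP htail
  -- Ico induction
  have main : ∀ v, v ≤ r → (X : PowerSeries ℂ) ^ (2 * (S + r)) ∣
      Fstar f lam v - ∑ u ∈ Finset.Ico v r, PowerSeries.C (R := ℂ) (P.coeff u) * f1 ^ (S + u) := by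
    intro v
    induction v with
    | zero =>
        intro _
        have : Fstar f lam 0 = (lam.map f).prod := rfl
        rw [this, ← Finset.range_eq_Ico]
        exact hbase
    | succ v ih =>
        intro hvr
        have hv : v < r := by omega
        have ihv := ih (by omega)
        have hbot : ∑ u ∈ Finset.Ico v r, PowerSeries.C (R := ℂ) (P.coeff u) * f1 ^ (S + u)
            = PowerSeries.C (R := ℂ) (P.coeff v) * f1 ^ (S + v)
              + ∑ u ∈ Finset.Ico (v + 1) r, PowerSeries.C (R := ℂ) (P.coeff u) * f1 ^ (S + u) :=
          Finset.sum_eq_sum_Ico_succ_bot hv _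
        -- compute a(λ,v) = P.coeff v
        have hav : coeff (R := ℂ) (2 * (S + v)) (Fstar f lam v) = P.coeff v := by
          have h0 : coeff (R := ℂ) (2 * (S + v))
              (Fstar f lam v - ∑ u ∈ Finset.Ico v r, PowerSeries.C (R := ℂ) (P.coeff u) * f1 ^ (S + u)) = 0 :=
            X_pow_dvd_iff.mp ihv _ (by omega)
          have hsumc : coeff (R := ℂ) (2 * (S + v))
              (∑ u ∈ Finset.Ico v r, PowerSeries.C (R := ℂ) (P.coeff u) * f1 ^ (S + u)) = P.coeff v := by
            rw [hbot, map_add, coeff_C_mul, hpowlead (S + v), mul_one, map_sum]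
            have : ∀ u ∈ Finset.Ico (v + 1) r,
                coeff (R := ℂ) (2 * (S + v)) (PowerSeries.C (R := ℂ) (P.coeff u) * f1 ^ (S + u)) = 0 := by
              intro u hu
              have huv : v + 1 ≤ u := (Finset.mem_Ico.mp hu).1
              rw [coeff_C_mul, coeff_pow_low hf1dvd (by omega), mul_zero]
            rw [Finset.sum_eq_zero this, add_zero]
          rw [map_sub, hsumc] at h0
          exact sub_eq_zero.mp h0
        have hstep : Fstar f lam (v + 1) = Fstar f lam v
            - PowerSeries.C (R := ℂ) (coeff (R := ℂ) (2 * (S + v)) (Fstar f lam v)) * f1 ^ (S + v) := rfl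
        rw [hstep, hav]
        have : Fstar f lam v - PowerSeries.C (R := ℂ) (P.coeff v) * f1 ^ (S + v)
            - ∑ u ∈ Finset.Ico (v + 1) r, PowerSeries.C (R := ℂ) (P.coeff u) * f1 ^ (S + u)
            = Fstar f lam v - ∑ u ∈ Finset.Ico v r, PowerSeries.C (R := ℂ) (P.coeff u) * f1 ^ (S + u) := by
          rw [hbot]; ring
        rw [this]
        exact ihv
  have hfin := main r le_rfl
  rw [Finset.Ico_self, Finset.sum_empty, sub_zero] at hfin
  exact fun m hm => X_pow_dvd_iff.mp hfin m hm
end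

section
/- Let a, b, c be pairwise relatively prime positive integers, S = ⟨ab, ac, bc⟩, and 𝔠 := 2abc − ab − ac − bc + 1. If s ∈ S satisfies s < 𝔠 and s admits more than one factorization over {ab, ac, bc}, then every factorization (x', y', z') of s satisfies x' ≥ c or y' ≥ b or z' ≥ a; moreover, in that case exactly one of the three inequalities can hold for a given factorization, with x' < 2c, y' ≤ b−1, z' ≤ a−1 when x' ≥ c (and symmetrically in the other two cases). -/
private lemma aux_mod_eq (c u₁ u₂ t₁ t₂ : ℕ) (h : u₁ + t₁ * c = u₂ + t₂ * c) :
    u₁ % c = u₂ % c := by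
  have h1 : (u₁ + t₁ * c) % c = (u₂ + t₂ * c) % c := by rw [h]
  simpa [Nat.add_mul_mod_self_right] using h1

private lemma aux_cancel (k c x₁ x₂ : ℕ) (hk : Nat.Coprime k c)
    (h : (x₁ * k) % c = (x₂ * k) % c) : x₁ % c = x₂ % c :=
  Nat.ModEq.cancel_right_of_coprime hk.symm h

private lemma aux_decomp (a b c x y z : ℕ) :
    x * (a * b) + y * (a * c) + z * (b * c) =
      (x % c) * (a * b) + (y % b) * (a * c) + (z % a) * (b * c)
        + (x / c + y / b + z / a) * (a * b * c) := by
  calc x * (a * b) + y * (a * c) + z * (b * c)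
      = (x % c + c * (x / c)) * (a * b) + (y % b + b * (y / b)) * (a * c)
          + (z % a + a * (z / a)) * (b * c) := by
        rw [Nat.mod_add_div, Nat.mod_add_div, Nat.mod_add_div]
    _ = (x % c) * (a * b) + (y % b) * (a * c) + (z % a) * (b * c)
          + (x / c + y / b + z / a) * (a * b * c) := by ring

private lemma aux_res (a b c : ℕ) (hab : Nat.Coprime a b) (hac : Nat.Coprime a c)
    (hbc : Nat.Coprime b c) (x₁ y₁ z₁ x₂ y₂ z₂ : ℕ)
    (h : x₁ * (a * b) + y₁ * (a * c) + z₁ * (b * c)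
        = x₂ * (a * b) + y₂ * (a * c) + z₂ * (b * c)) :
    x₁ % c = x₂ % c ∧ y₁ % b = y₂ % b ∧ z₁ % a = z₂ % a := by
  refine ⟨?_, ?_, ?_⟩
  · refine aux_cancel (a * b) c x₁ x₂ (Nat.Coprime.mul hac hbc) ?_
    refine aux_mod_eq c _ _ (y₁ * a + z₁ * b) (y₂ * a + z₂ * b) ?_
    linarith [h, (by ring : y₁ * (a * c) + z₁ * (b * c) = (y₁ * a + z₁ * b) * c),
      (by ring : y₂ * (a * c) + z₂ * (b * c) = (y₂ * a + z₂ * b) * c)]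
  · refine aux_cancel (a * c) b y₁ y₂ (Nat.Coprime.mul hab hbc.symm) ?_
    refine aux_mod_eq b _ _ (x₁ * a + z₁ * c) (x₂ * a + z₂ * c) ?_
    linarith [h, (by ring : x₁ * (a * b) + z₁ * (b * c) = (x₁ * a + z₁ * c) * b),
      (by ring : x₂ * (a * b) + z₂ * (b * c) = (x₂ * a + z₂ * c) * b)]
  · refine aux_cancel (b * c) a z₁ z₂ (Nat.Coprime.mul hab.symm hac.symm) ?_
    refine aux_mod_eq a _ _ (x₁ * b + y₁ * c) (x₂ * b + y₂ * c) ?_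
    linarith [h, (by ring : x₁ * (a * b) + y₁ * (a * c) = (x₁ * b + y₁ * c) * a),
      (by ring : x₂ * (a * b) + y₂ * (a * c) = (x₂ * b + y₂ * c) * a)]

/-- For pairwise coprime positive `a, b, c`, if `s ∈ S = ⟨ab, ac, bc⟩`
is below the conductor `𝔠 = 2abc − ab − ac − bc + 1` and admits more than one
factorization, then each factorization `(x', y', z')` of `s` satisfies `x' ≥ c` or
`y' ≥ b` or `z' ≥ a`, and exactly one of these can hold; moreover when `x' ≥ c` one
has `x' < 2c`, `y' ≤ b − 1`, `z' ≤ a − 1`, and symmetrically in the other cases. -/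
theorem stmt_15 (a b c : ℕ) (ha : 0 < a) (hb : 0 < b) (hc : 0 < c)
    (hab : Nat.Coprime a b) (hac : Nat.Coprime a c) (hbc : Nat.Coprime b c)
    (s : ℕ) (hs : (s : ℤ) < 2 * (a : ℤ) * b * c - a * b - a * c - b * c + 1)
    (hmulti : ∃ v w : ℕ × ℕ × ℕ, v ≠ w ∧
      v.1 * (a * b) + v.2.1 * (a * c) + v.2.2 * (b * c) = s ∧
      w.1 * (a * b) + w.2.1 * (a * c) + w.2.2 * (b * c) = s) :
    ∀ x' y' z' : ℕ, x' * (a * b) + y' * (a * c) + z' * (b * c) = s →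
      ((c ≤ x' ∧ ¬ b ≤ y' ∧ ¬ a ≤ z' ∧ x' < 2 * c ∧ y' ≤ b - 1 ∧ z' ≤ a - 1) ∨
       (b ≤ y' ∧ ¬ c ≤ x' ∧ ¬ a ≤ z' ∧ y' < 2 * b ∧ x' ≤ c - 1 ∧ z' ≤ a - 1) ∨
       (a ≤ z' ∧ ¬ c ≤ x' ∧ ¬ b ≤ y' ∧ z' < 2 * a ∧ x' ≤ c - 1 ∧ y' ≤ b - 1)) := by
  obtain ⟨⟨x₁, y₁, z₁⟩, ⟨x₂, y₂, z₂⟩, hvw, hv, hw⟩ := hmulti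
  dsimp only at hv hw
  simp only [ne_eq, Prod.mk.injEq, not_and] at hvw
  intro x' y' z' hxyz
  have habc : 0 < a * b * c := by positivity
  -- residues agree
  obtain ⟨r1, r2, r3⟩ :=
    aux_res a b c hab hac hbc x' y' z' x₁ y₁ z₁ (hxyz.trans hv.symm)
  obtain ⟨q1, q2, q3⟩ :=
    aux_res a b c hab hac hbc x₁ y₁ z₁ x₂ y₂ z₂ (hv.trans hw.symm)
  have d' := aux_decomp a b c x' y' z'
  have d1 := aux_decomp a b c x₁ y₁ z₁
  have d2 := aux_decomp a b c x₂ y₂ z₂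
  rw [hxyz] at d'
  rw [hv] at d1
  rw [hw] at d2
  -- the multiplicities agree
  have e1 : x' / c + y' / b + z' / a = x₁ / c + y₁ / b + z₁ / a := by
    rw [r1, r2, r3] at d'
    have h := d'.symm.trans d1
    exact Nat.eq_of_mul_eq_mul_right habc (by omega)
  have e2 : x₁ / c + y₁ / b + z₁ / a = x₂ / c + y₂ / b + z₂ / a := by
    rw [q1, q2, q3] at d1
    have h := d1.symm.trans d2
    exact Nat.eq_of_mul_eq_mul_right habc (by omega)
  -- the multiplicity of (x₁,y₁,z₁) is at least 1
  have hm1pos : 1 ≤ x₁ / c + y₁ / b + z₁ / a := by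
    by_contra h
    have hz1 : x₁ / c + y₁ / b + z₁ / a = 0 := Nat.lt_one_iff.mp (Nat.not_le.mp h)
    have hz2 : x₂ / c + y₂ / b + z₂ / a = 0 := by rw [← e2]; exact hz1
    have hq1 : x₁ / c = 0 ∧ y₁ / b = 0 ∧ z₁ / a = 0 := by
      generalize x₁ / c = A at hz1 ⊢
      generalize y₁ / b = B at hz1 ⊢
      generalize z₁ / a = C at hz1 ⊢
      omega
    have hq2 : x₂ / c = 0 ∧ y₂ / b = 0 ∧ z₂ / a = 0 := by
      generalize x₂ / c = A at hz2 ⊢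
      generalize y₂ / b = B at hz2 ⊢
      generalize z₂ / a = C at hz2 ⊢
      omega
    have m1 : x₁ % c + c * (x₁ / c) = x₁ := Nat.mod_add_div x₁ c
    have m2 : y₁ % b + b * (y₁ / b) = y₁ := Nat.mod_add_div y₁ b
    have m3 : z₁ % a + a * (z₁ / a) = z₁ := Nat.mod_add_div z₁ a
    have m4 : x₂ % c + c * (x₂ / c) = x₂ := Nat.mod_add_div x₂ c
    have m5 : y₂ % b + b * (y₂ / b) = y₂ := Nat.mod_add_div y₂ b
    have m6 : z₂ % a + a * (z₂ / a) = z₂ := Nat.mod_add_div z₂ a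
    rw [hq1.1, Nat.mul_zero, Nat.add_zero] at m1
    rw [hq1.2.1, Nat.mul_zero, Nat.add_zero] at m2
    rw [hq1.2.2, Nat.mul_zero, Nat.add_zero] at m3
    rw [hq2.1, Nat.mul_zero, Nat.add_zero] at m4
    rw [hq2.2.1, Nat.mul_zero, Nat.add_zero] at m5
    rw [hq2.2.2, Nat.mul_zero, Nat.add_zero] at m6
    exact hvw ((m1.symm.trans q1).trans m4) ((m2.symm.trans q2).trans m5)
      ((m3.symm.trans q3).trans m6)
  -- the multiplicity of (x',y',z') is at most 1
  have hsle : (x' / c + y' / b + z' / a) * (a * b * c) ≤ s := by omega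
  have hm1 : x' / c + y' / b + z' / a = 1 := by
    by_contra h
    have h2 : 2 ≤ x' / c + y' / b + z' / a := by
      rw [e1]
      generalize x₁ / c = A at hm1pos h e1 ⊢
      generalize y₁ / b = B at hm1pos h e1 ⊢
      generalize z₁ / a = C at hm1pos h e1 ⊢
      omega
    have h3 : 2 * (a * b * c) ≤ (x' / c + y' / b + z' / a) * (a * b * c) :=
      Nat.mul_le_mul_right _ h2
    have h4 : (2 * (a * b * c) : ℤ) ≤ (s : ℤ) := by exact_mod_cast h3.trans hsle
    have hab1 : (1 : ℤ) ≤ (a : ℤ) * b := by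
      have : 1 ≤ a * b := Nat.one_le_iff_ne_zero.mpr (by positivity)
      exact_mod_cast this
    have hac1 : (1 : ℤ) ≤ (a : ℤ) * c := by
      have : 1 ≤ a * c := Nat.one_le_iff_ne_zero.mpr (by positivity)
      exact_mod_cast this
    have hbc1 : (1 : ℤ) ≤ (b : ℤ) * c := by
      have : 1 ≤ b * c := Nat.one_le_iff_ne_zero.mpr (by positivity)
      exact_mod_cast this
    linarith [hs, h4, hab1, hac1, hbc1]
  -- conclude
  have hxm : x' % c + c * (x' / c) = x' := Nat.mod_add_div x' c
  have hym : y' % b + b * (y' / b) = y' := Nat.mod_add_div y' b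
  have hzm : z' % a + a * (z' / a) = z' := Nat.mod_add_div z' a
  have hxl : x' % c < c := Nat.mod_lt _ hc
  have hyl : y' % b < b := Nat.mod_lt _ hb
  have hzl : z' % a < a := Nat.mod_lt _ ha
  have hcase : (x' / c = 1 ∧ y' / b = 0 ∧ z' / a = 0) ∨
      (y' / b = 1 ∧ x' / c = 0 ∧ z' / a = 0) ∨
      (z' / a = 1 ∧ x' / c = 0 ∧ y' / b = 0) := by
    generalize x' / c = A at hm1 ⊢
    generalize y' / b = B at hm1 ⊢
    generalize z' / a = C at hm1 ⊢
    omega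
  rcases hcase with ⟨h1, h2, h3⟩ | ⟨h1, h2, h3⟩ | ⟨h1, h2, h3⟩
  · rw [h1] at hxm; rw [h2] at hym; rw [h3] at hzm
    left; omega
  · rw [h1] at hym; rw [h2] at hxm; rw [h3] at hzm
    right; left; omega
  · rw [h1] at hzm; rw [h2] at hxm; rw [h3] at hym
    right; right; omega
end
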